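/- arXiv:1501.07366 — 9 statements merged into one kernel-verified Lean document; each statement's English description precedes it below -/
import Mathlib

section
/- Let G be a group, Y a central subgroup of G contained in a normal subgroup X of G. Then the group of all automorphisms of G that restrict to the identity on X and induce the identity on G/Y is isomorphic to Hom(G/X, Y). -/
open scoped IsMulCommutative

/-- Let `Y` be a central subgroup of `G` contained in a normal subgroup `X`.  The group `S`
of automorphisms of `G` that restrict to the identity on `X` and induce the identity on
`G/Y` is isomorphic to `Hom(G/X, Y)`. -/
theorem stmt_2 (G : Type*) [Group G] (X Y : Subgroup G) [X.Normal] [IsMulCommutative Y]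
    (hYZ : Y ≤ Subgroup.center G) (hYX : Y ≤ X)
    (S : Subgroup (MulAut G))
    (hS : ∀ α : MulAut G, α ∈ S ↔ (∀ x ∈ X, α x = x) ∧ ∀ g : G, g⁻¹ * α g ∈ Y) :
    Nonempty (S ≃* ((G ⧸ X) →* Y)) := by
  classical
  have hcomm : ∀ y ∈ Y, ∀ g : G, y * g = g * y := fun y hy g =>
    ((Subgroup.mem_center_iff.mp (hYZ hy)) g).symm
  -- the underlying map G →* Y for α ∈ S
  have hmul : ∀ α : S, ∀ g h : G,
      (g * h)⁻¹ * (α : MulAut G) (g * h) =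
        (g⁻¹ * (α : MulAut G) g) * (h⁻¹ * (α : MulAut G) h) := by
    intro α g h
    have hy : g⁻¹ * (α : MulAut G) g ∈ Y := ((hS α).mp α.2).2 g
    have := hcomm _ hy (h⁻¹)
    rw [map_mul, mul_inv_rev]
    calc h⁻¹ * g⁻¹ * ((α : MulAut G) g * (α : MulAut G) h)
        = h⁻¹ * (g⁻¹ * (α : MulAut G) g) * (α : MulAut G) h := by group
      _ = (g⁻¹ * (α : MulAut G) g) * h⁻¹ * (α : MulAut G) h := by rw [← this]
      _ = (g⁻¹ * (α : MulAut G) g) * (h⁻¹ * (α : MulAut G) h) := by group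
  let f : S → (G →* Y) := fun α =>
    { toFun := fun g => ⟨g⁻¹ * (α : MulAut G) g, ((hS α).mp α.2).2 g⟩
      map_one' := by ext; simp
      map_mul' := fun g h => by ext; exact hmul α g h }
  have hfX : ∀ α : S, ∀ x ∈ X, f α x = 1 := by
    intro α x hx
    ext
    simp only [f, MonoidHom.coe_mk, OneHom.coe_mk]
    rw [((hS α).mp α.2).1 x hx]
    simp
  let F : S → ((G ⧸ X) →* Y) := fun α => QuotientGroup.lift X (f α) (hfX α)
  have hF : ∀ α : S, ∀ g : G, ((F α (g : G ⧸ X) : Y) : G) = g⁻¹ * (α : MulAut G) g :=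
    fun α g => rfl
  -- F is multiplicative
  have Fmul : ∀ α β : S, F (α * β) = F α * F β := by
    intro α β
    ext g
    · have hy : g⁻¹ * (β : MulAut G) g ∈ Y := ((hS β).mp β.2).2 g
      have hfix : (α : MulAut G) (g⁻¹ * (β : MulAut G) g) = g⁻¹ * (β : MulAut G) g :=
        ((hS α).mp α.2).1 _ (hYX hy)
      have : ((F (α * β) (g : G ⧸ X) : Y) : G) = ((F α (g : G ⧸ X) : Y) : G) * ((F β (g : G ⧸ X) : Y) : G) := by
        rw [hF, hF, hF]
        have : (↑(α * β) : MulAut G) g = (α : MulAut G) ((β : MulAut G) g) := rfl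
        rw [this]
        have h2 : (β : MulAut G) g = g * (g⁻¹ * (β : MulAut G) g) := by group
        calc g⁻¹ * (α : MulAut G) ((β : MulAut G) g)
            = g⁻¹ * (α : MulAut G) (g * (g⁻¹ * (β : MulAut G) g)) := by rw [← h2]
          _ = g⁻¹ * ((α : MulAut G) g * (g⁻¹ * (β : MulAut G) g)) := by rw [map_mul, hfix]
          _ = (g⁻¹ * (α : MulAut G) g) * (g⁻¹ * (β : MulAut G) g) := by group
      simpa only [MonoidHom.comp_apply, QuotientGroup.mk'_apply, MonoidHom.mul_apply, Subgroup.coe_mul] using this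
  -- injectivity
  have Finj : Function.Injective F := by
    intro α β h
    have : ∀ g : G, (α : MulAut G) g = (β : MulAut G) g := by
      intro g
      have h1 := congrArg (fun φ => ((φ (g : G ⧸ X) : Y) : G)) h
      simp only [hF] at h1
      exact mul_left_cancel h1
    exact Subtype.ext (MulEquiv.ext this)
  -- surjectivity
  have Fsurj : Function.Surjective F := by
    intro φ
    have hconst : ∀ g : G, ∀ y ∈ X, φ ((g * y : G) : G ⧸ X) = φ (g : G ⧸ X) := by
      intro g y hy
      have : ((g * y : G) : G ⧸ X) = (g : G ⧸ X) := by
        rw [QuotientGroup.mk_mul, (QuotientGroup.eq_one_iff y).mpr hy, mul_one]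
      rw [this]
    -- define the automorphism
    refine ⟨⟨{ toFun := fun g => g * (φ (g : G ⧸ X) : G)
               invFun := fun g => g * ((φ (g : G ⧸ X))⁻¹ : Y)
               left_inv := ?_
               right_inv := ?_
               map_mul' := ?_ }, ?_⟩, ?_⟩
    · intro g
      simp only
      have hy : ((φ (g : G ⧸ X) : Y) : G) ∈ X := hYX (φ (g : G ⧸ X)).2
      rw [hconst g _ hy]
      simp [mul_assoc]
    · intro g
      simp only
      have hy : (((φ (g : G ⧸ X))⁻¹ : Y) : G) ∈ X := hYX ((φ (g : G ⧸ X))⁻¹).2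
      rw [hconst g _ hy]
      simp [mul_assoc]
    · intro g h
      simp only [QuotientGroup.mk_mul, map_mul]
      push_cast
      have := hcomm _ (φ (g : G ⧸ X)).2 h
      calc g * h * ((φ (g : G ⧸ X) : G) * (φ (h : G ⧸ X) : G))
          = g * (h * (φ (g : G ⧸ X) : G)) * (φ (h : G ⧸ X) : G) := by group
        _ = g * ((φ (g : G ⧸ X) : G) * h) * (φ (h : G ⧸ X) : G) := by rw [this]
        _ = g * (φ (g : G ⧸ X) : G) * (h * (φ (h : G ⧸ X) : G)) := by group
    · rw [hS]
      constructor
      · intro x hx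
        show x * (φ (x : G ⧸ X) : G) = x
        rw [(QuotientGroup.eq_one_iff x).mpr hx]
        simp
      · intro g
        show g⁻¹ * (g * (φ (g : G ⧸ X) : G)) ∈ Y
        rw [← mul_assoc]
        simp
    · ext g
      · simp only [MonoidHom.comp_apply, QuotientGroup.mk'_apply]
        rw [hF]
        show g⁻¹ * (g * (φ (g : G ⧸ X) : G)) = _
        rw [← mul_assoc]
        simp
  exact ⟨MulEquiv.ofBijective (MonoidHom.mk' F Fmul) ⟨Finj, Fsurj⟩⟩
end

section
/- Let G be a group and let C* denote the group of central automorphisms of G that fix the center Z(G) elementwise. Then C* is isomorphic to Hom(G/Z(G), Z(G)). -/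
open scoped IsMulCommutative

/-- The group `C*` of central automorphisms of `G` fixing the center elementwise is
isomorphic to `Hom(G/Z(G), Z(G))`. -/
theorem stmt_3 (G : Type*) [Group G]
    (Cstar : Subgroup (MulAut G))
    (hC : ∀ α : MulAut G, α ∈ Cstar ↔
      (∀ g : G, g⁻¹ * α g ∈ Subgroup.center G) ∧ ∀ z ∈ Subgroup.center G, α z = z) :
    Nonempty (Cstar ≃* ((G ⧸ Subgroup.center G) →* Subgroup.center G)) := by
  set Z := Subgroup.center G with hZ
  have key : ∀ α : Cstar, ∀ g : G, g⁻¹ * (α : MulAut G) g ∈ Z :=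
    fun α g => ((hC α).1 α.2).1 g
  have fix : ∀ α : Cstar, ∀ z ∈ Z, (α : MulAut G) z = z :=
    fun α => ((hC α).1 α.2).2
  -- the homomorphism G →* Z attached to α
  have fdef : ∀ α : Cstar, ∃ f : G →* Z, ∀ g : G, (f g : G) = g⁻¹ * (α : MulAut G) g := by
    intro α
    refine ⟨{ toFun := fun g => ⟨g⁻¹ * (α : MulAut G) g, key α g⟩
              map_one' := by ext; simp
              map_mul' := ?_ }, fun g => rfl⟩
    intro g h
    ext
    have hc : h⁻¹ * (g⁻¹ * (α : MulAut G) g) = (g⁻¹ * (α : MulAut G) g) * h⁻¹ :=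
      Subgroup.mem_center_iff.1 (key α g) h⁻¹
    show (g * h)⁻¹ * (α : MulAut G) (g * h)
        = (g⁻¹ * (α : MulAut G) g) * (h⁻¹ * (α : MulAut G) h)
    rw [map_mul, mul_inv_rev]
    have e1 : h⁻¹ * g⁻¹ * ((α : MulAut G) g * (α : MulAut G) h)
        = h⁻¹ * (g⁻¹ * (α : MulAut G) g) * (α : MulAut G) h := by group
    rw [e1, hc]
    group
  choose f hf using fdef
  -- lift to quotient
  have hker : ∀ α : Cstar, ∀ z ∈ Z, f α z = 1 := by
    intro α z hz
    ext
    simp [hf, fix α z hz]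
  let F : Cstar → ((G ⧸ Z) →* Z) := fun α =>
    QuotientGroup.lift Z (f α) (fun z hz => hker α z hz)
  have hF : ∀ (α : Cstar) (g : G), (F α (g : G ⧸ Z) : G) = g⁻¹ * (α : MulAut G) g := by
    intro α g; exact hf α g
  -- the inverse map
  have autdef : ∀ h : (G ⧸ Z) →* Z, ∃ β : MulAut G,
      (∀ g : G, β g = g * (h (g : G ⧸ Z) : G)) ∧ β ∈ Cstar := by
    intro h
    have hmk : ∀ g : G, ((g * (h (g : G ⧸ Z) : G) : G) : G ⧸ Z) = (g : G ⧸ Z) := by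
      intro g
      rw [QuotientGroup.mk_mul]
      have : ((h (g : G ⧸ Z) : G) : G ⧸ Z) = 1 :=
        (QuotientGroup.eq_one_iff _).2 (h (g : G ⧸ Z)).2
      rw [this, mul_one]
    refine ⟨{ toFun := fun g => g * (h (g : G ⧸ Z) : G)
              invFun := fun g => g * ((h (g : G ⧸ Z) : G))⁻¹
              left_inv := ?_
              right_inv := ?_
              map_mul' := ?_ }, fun g => rfl, ?_⟩
    · intro g
      simp only [hmk g]
      group
    · intro g
      have hmk' : ((g * ((h (g : G ⧸ Z) : G))⁻¹ : G) : G ⧸ Z) = (g : G ⧸ Z) := by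
        rw [QuotientGroup.mk_mul]
        have : ((((h (g : G ⧸ Z) : G))⁻¹ : G) : G ⧸ Z) = 1 :=
          (QuotientGroup.eq_one_iff _).2 (Z.inv_mem (h (g : G ⧸ Z)).2)
        rw [this, mul_one]
      simp only [hmk']
      group
    · intro g k
      simp only [QuotientGroup.mk_mul, map_mul]
      have hc : k * (h (g : G ⧸ Z) : G) = (h (g : G ⧸ Z) : G) * k :=
        Subgroup.mem_center_iff.1 (h (g : G ⧸ Z)).2 k
      push_cast
      rw [← mul_assoc, mul_assoc g k, hc]
      group
    · rw [hC]
      constructor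
      · intro g
        show g⁻¹ * (g * (h (g : G ⧸ Z) : G)) ∈ Z
        rw [← mul_assoc, inv_mul_cancel, one_mul]
        exact (h (g : G ⧸ Z)).2
      · intro z hz
        show z * (h (z : G ⧸ Z) : G) = z
        rw [(QuotientGroup.eq_one_iff z).2 hz, map_one]
        simp
  choose aut haut hmem using autdef
  refine ⟨{ toFun := F
            invFun := fun h => ⟨aut h, hmem h⟩
            left_inv := ?_
            right_inv := ?_
            map_mul' := ?_ }⟩
  · intro α
    ext g
    show aut (F α) g = (α : MulAut G) g
    rw [haut (F α) g, hF α g]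
    group
  · intro h
    ext g
    simp only [MonoidHom.comp_apply, QuotientGroup.mk'_apply]
    rw [hF ⟨aut h, hmem h⟩ g]
    show g⁻¹ * aut h g = _
    rw [haut h g, ← mul_assoc, inv_mul_cancel, one_mul]
  · intro α β
    ext g
    show (F (α * β) (g : G ⧸ Z) : G) = ((F α (g : G ⧸ Z) : G) * (F β (g : G ⧸ Z) : G))
    rw [hF, hF, hF]
    have hβ : (β : MulAut G) g = g * (g⁻¹ * (β : MulAut G) g) := by group
    show g⁻¹ * (α : MulAut G) ((β : MulAut G) g) = _
    rw [hβ, map_mul, fix α _ (key β g)]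
    group
end

section
/- Let G be a finitely generated group, M and N normal subgroups of G with M ≤ Z(G) ≤ N and G/Z(G) finite. If the subgroup Aut_N^M(G) of automorphisms of G that fix N elementwise and induce the identity on G/M equals Inn(G), then G is nilpotent of class 2, N = Z(G), and G' ≤ M. -/
/-- Let `G` be a finitely generated non-abelian group, `M ≤ Z(G) ≤ N` normal subgroups with
`G/Z(G)` finite.  If the group `Aut_N^M(G)` of automorphisms fixing `N` elementwise and
inducing the identity on `G/M` equals `Inn(G)`, then `G` is nilpotent of class 2,
`N = Z(G)` and `G' ≤ M`. -/
theorem stmt_4 (G : Type*) [Group G] [Group.FG G]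
    (hnab : ∃ a b : G, a * b ≠ b * a)
    (M N : Subgroup G) [M.Normal] [N.Normal]
    (hM : M ≤ Subgroup.center G) (hN : Subgroup.center G ≤ N)
    [Finite (G ⧸ Subgroup.center G)]
    (S : Subgroup (MulAut G))
    (hS : ∀ α : MulAut G, α ∈ S ↔ (∀ n ∈ N, α n = n) ∧ ∀ g : G, g⁻¹ * α g ∈ M)
    (heq : S = (MulAut.conj : G →* MulAut G).range) :
    commutator G ≤ Subgroup.center G ∧ N = Subgroup.center G ∧ commutator G ≤ M := by
  have hconj : ∀ k : G, (∀ n ∈ N, MulAut.conj k n = n) ∧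
      ∀ g : G, g⁻¹ * MulAut.conj k g ∈ M := by
    intro k
    rw [← hS]
    rw [heq]
    exact ⟨k, rfl⟩
  have hCM : commutator G ≤ M := by
    rw [commutator_def, Subgroup.commutator_le]
    intro h _ k _
    have := (hconj k).2 h⁻¹
    simpa [commutatorElement_def, MulAut.conj_apply, mul_assoc] using this
  have hNZ : N = Subgroup.center G := by
    refine le_antisymm ?_ hN
    intro n hn
    rw [Subgroup.mem_center_iff]
    intro g
    have := (hconj g).1 n hn
    simp only [MulAut.conj_apply] at this
    have : g * n = n * g := by
      have h2 := congrArg (· * g) this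
      simpa [mul_assoc] using h2
    exact this
  exact ⟨hCM.trans hM, hNZ, hCM⟩
end

section
/- Let G be a finitely generated nilpotent group of class 2 whose center Z(G) is infinite cyclic. Then the group C* of central automorphisms fixing Z(G) elementwise is isomorphic to Inn(G). -/
/-- Let `G` be a finitely generated nilpotent group of class 2 with infinite cyclic center.
Then `C*`, the group of central automorphisms fixing the center elementwise, is isomorphic
to `Inn(G)`. -/
theorem stmt_6 (G : Type*) [Group G] [Group.FG G]
    (hnab : ∃ a b : G, a * b ≠ b * a)
    (hc2 : commutator G ≤ Subgroup.center G)
    (hZ : Nonempty (Subgroup.center G ≃* Multiplicative ℤ))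
    (Cstar : Subgroup (MulAut G))
    (hC : ∀ α : MulAut G, α ∈ Cstar ↔
      (∀ g : G, g⁻¹ * α g ∈ Subgroup.center G) ∧ ∀ z ∈ Subgroup.center G, α z = z) :
    Nonempty (Cstar ≃* (MulAut.conj : G →* MulAut G).range) := by
  classical
  obtain ⟨e⟩ := hZ
  -- commutators are central
  have hcomm : ∀ a b : G, a * b * a⁻¹ * b⁻¹ ∈ Subgroup.center G := by
    intro a b
    open scoped commutatorElement in
    have h1 : ⁅a, b⁆ ∈ commutator G := by
      rw [commutator_def]
      exact Subgroup.commutator_mem_commutator (Subgroup.mem_top a) (Subgroup.mem_top b)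
    exact hc2 h1
  -- the center is torsion-free
  have hZtf : ∀ (z : Subgroup.center G) (n : ℕ), n ≠ 0 → z ^ n = 1 → z = 1 := by
    intro z n hn h
    have h2 : (e z) ^ n = 1 := by rw [← map_pow, h, map_one]
    have h3 : (n : ℤ) * (e z).toAdd = 0 := by
      have := congrArg Multiplicative.toAdd h2
      rw [toAdd_pow] at this
      simpa [nsmul_eq_mul] using this
    have h4 : (e z).toAdd = 0 := by
      rcases mul_eq_zero.mp h3 with h | h
      · exact absurd (by exact_mod_cast h) hn
      · exact h
    have h5 : e z = 1 := by
      have : (e z).toAdd = (1 : Multiplicative ℤ).toAdd := h4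
      exact Multiplicative.toAdd.injective this
    exact e.injective (by rw [h5, map_one])
  -- key class-2 identity : a^n * b = [a,b]^n * b * a^n
  have key : ∀ (a b : G) (n : ℕ),
      a ^ n * b = (a * b * a⁻¹ * b⁻¹) ^ n * b * a ^ n := by
    intro a b n
    induction n with
    | zero => simp
    | succ n ih =>
      have hcZ : (a * b * a⁻¹ * b⁻¹) ^ n ∈ Subgroup.center G := pow_mem (hcomm a b) n
      have hcc : a * (a * b * a⁻¹ * b⁻¹) ^ n = (a * b * a⁻¹ * b⁻¹) ^ n * a :=
        Subgroup.mem_center_iff.mp hcZ a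
      have hab : a * b = (a * b * a⁻¹ * b⁻¹) * (b * a) := by group
      calc a ^ (n + 1) * b = a * (a ^ n * b) := by group
        _ = a * ((a * b * a⁻¹ * b⁻¹) ^ n * b * a ^ n) := by rw [ih]
        _ = (a * (a * b * a⁻¹ * b⁻¹) ^ n) * b * a ^ n := by simp [mul_assoc]
        _ = ((a * b * a⁻¹ * b⁻¹) ^ n * a) * b * a ^ n := by rw [hcc]
        _ = (a * b * a⁻¹ * b⁻¹) ^ n * (a * b) * a ^ n := by simp [mul_assoc]
        _ = (a * b * a⁻¹ * b⁻¹) ^ n * ((a * b * a⁻¹ * b⁻¹) * (b * a)) * a ^ n := by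
              rw [← hab]
        _ = (a * b * a⁻¹ * b⁻¹) ^ (n + 1) * b * a ^ (n + 1) := by
              rw [pow_succ (a * b * a⁻¹ * b⁻¹) n, pow_succ' a n]; simp [mul_assoc]
  -- the quotient by the center is torsion-free
  have hQtf : ∀ (q : G ⧸ Subgroup.center G) (n : ℕ), n ≠ 0 → q ^ n = 1 → q = 1 := by
    intro q n hn hq
    induction q using QuotientGroup.induction_on with
    | H g =>
      have hgn : g ^ n ∈ Subgroup.center G := by
        rw [← QuotientGroup.eq_one_iff (g ^ n), QuotientGroup.mk_pow]
        exact hq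
      rw [QuotientGroup.eq_one_iff g]
      rw [Subgroup.mem_center_iff]
      intro x
      have hcn : (g * x * g⁻¹ * x⁻¹) ^ n = 1 := by
        have h1 := key g x n
        have h2 : g ^ n * x = x * g ^ n := (Subgroup.mem_center_iff.mp hgn x).symm
        have h3 : (g * x * g⁻¹ * x⁻¹) ^ n * (x * g ^ n) = x * g ^ n := by
          rw [← mul_assoc, ← h1, h2]
        exact mul_right_cancel (by rw [h3, one_mul])
      have hc1 : (⟨g * x * g⁻¹ * x⁻¹, hcomm g x⟩ : Subgroup.center G) = 1 := by
        apply hZtf _ n hn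
        ext
        simpa using hcn
      have hc1' : g * x * g⁻¹ * x⁻¹ = 1 := congrArg Subtype.val hc1
      have h4 : g * x = (g * x * g⁻¹ * x⁻¹) * (x * g) := by group
      rw [hc1', one_mul] at h4
      exact h4.symm
  -- Q := G / Z(G) is a finitely generated torsion-free abelian group
  letI : CommGroup (G ⧸ Subgroup.center G) :=
    { (inferInstance : Group (G ⧸ Subgroup.center G)) with
      mul_comm := by
        intro x y
        induction x using QuotientGroup.induction_on with
        | H a =>
          induction y using QuotientGroup.induction_on with
          | H b =>
            rw [← QuotientGroup.mk_mul, ← QuotientGroup.mk_mul, QuotientGroup.eq]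
            have h1 : (a * b)⁻¹ * (b * a) = b⁻¹ * a⁻¹ * (b⁻¹)⁻¹ * (a⁻¹)⁻¹ := by group
            rw [h1]
            exact hcomm b⁻¹ a⁻¹ }
  letI : Group.FG (G ⧸ Subgroup.center G) :=
    Group.fg_of_surjective (QuotientGroup.mk'_surjective (Subgroup.center G))
  letI : Module.Finite ℤ (Additive (G ⧸ Subgroup.center G)) :=
    Module.Finite.iff_addGroup_fg.mpr inferInstance
  letI : NoZeroSMulDivisors ℤ (Additive (G ⧸ Subgroup.center G)) := by
    refine ⟨fun {n a} h => ?_⟩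
    by_cases hn : n = 0
    · exact Or.inl hn
    · right
      have h1 : a.toMul ^ n = 1 := by rw [← toMul_zsmul, h]; rfl
      have h2 : a.toMul ^ (n.natAbs : ℤ) = 1 := by
        rcases Int.natAbs_eq n with h' | h'
        · rw [← h']; exact h1
        · rw [h', zpow_neg, inv_eq_one] at h1; exact h1
      have h3 : a.toMul ^ n.natAbs = 1 := by rw [← zpow_natCast]; exact h2
      have h4 := hQtf a.toMul n.natAbs (Int.natAbs_ne_zero.mpr hn) h3
      exact Additive.toMul.injective h4
  letI : Module.Free ℤ (Additive (G ⧸ Subgroup.center G)) :=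
    Module.free_of_finite_type_torsion_free'
  let b := Module.Free.chooseBasis ℤ (Additive (G ⧸ Subgroup.center G))
  let φ0 : (Additive (G ⧸ Subgroup.center G) →+ ℤ) ≃+
      Module.Dual ℤ (Additive (G ⧸ Subgroup.center G)) :=
    { toFun := AddMonoidHom.toIntLinearMap
      invFun := LinearMap.toAddMonoidHom
      left_inv := fun _ => rfl
      right_inv := fun _ => rfl
      map_add' := fun _ _ => rfl }
  let ψ : (Additive (G ⧸ Subgroup.center G) →+ ℤ) ≃+ Additive (G ⧸ Subgroup.center G) :=
    φ0.trans b.toDualEquiv.symm.toAddEquiv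
  -- E2 : homs to Multiplicative ℤ from the quotient ≃ the quotient
  let E2 : ((G ⧸ Subgroup.center G) →* Multiplicative ℤ) ≃* (G ⧸ Subgroup.center G) :=
    { toFun := fun f => (ψ (MonoidHom.toAdditiveLeft f)).toMul
      invFun := fun q => MonoidHom.toAdditiveLeft.symm (ψ.symm (Additive.ofMul q))
      left_inv := fun f => by simp
      right_inv := fun q => by simp
      map_mul' := fun f g => by
        have h1 : MonoidHom.toAdditiveLeft (f * g) =
            MonoidHom.toAdditiveLeft f + MonoidHom.toAdditiveLeft g := by
          refine AddMonoidHom.ext fun x => rfl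
        show (ψ (MonoidHom.toAdditiveLeft (f * g))).toMul = _
        rw [h1, map_add]
        rfl }
  -- E3 : the quotient ≃ Inn(G)
  have hker : Subgroup.center G = (MulAut.conj : G →* MulAut G).ker := by
    ext g
    constructor
    · intro hg
      rw [MonoidHom.mem_ker]
      refine MulEquiv.ext fun x => ?_
      show g * x * g⁻¹ = x
      rw [← Subgroup.mem_center_iff.mp hg x, mul_inv_cancel_right]
    · intro hg
      rw [MonoidHom.mem_ker] at hg
      rw [Subgroup.mem_center_iff]
      intro x
      have h3 : g * x * g⁻¹ = x := by
        have := MulEquiv.ext_iff.mp hg x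
        simpa using this
      calc x * g = (g * x * g⁻¹) * g := by rw [h3]
        _ = g * x := by group
  let E3 : (G ⧸ Subgroup.center G) ≃* (MulAut.conj : G →* MulAut G).range :=
    (QuotientGroup.quotientMulEquivOfEq hker).trans
      (QuotientGroup.quotientKerEquivRange (MulAut.conj : G →* MulAut G))
  -- E1 : Cstar ≃ homs from the quotient to Multiplicative ℤ
  have hmemZ : ∀ α : Cstar, ∀ g : G, g⁻¹ * α.1 g ∈ Subgroup.center G :=
    fun α g => ((hC α.1).mp α.2).1 g
  have hfix : ∀ α : Cstar, ∀ z ∈ Subgroup.center G, α.1 z = z :=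
    fun α => ((hC α.1).mp α.2).2
  let fhom : Cstar → (G →* Multiplicative ℤ) := fun α =>
    { toFun := fun g => e ⟨g⁻¹ * α.1 g, hmemZ α g⟩
      map_one' := by
        show e ⟨(1:G)⁻¹ * α.1 1, hmemZ α 1⟩ = 1
        have h0 : (⟨(1:G)⁻¹ * α.1 1, hmemZ α 1⟩ : Subgroup.center G) = 1 := by
          ext; simp
        rw [h0, map_one]
      map_mul' := by
        intro g h
        show e ⟨(g*h)⁻¹ * α.1 (g*h), hmemZ α (g*h)⟩ =
          e ⟨g⁻¹ * α.1 g, hmemZ α g⟩ * e ⟨h⁻¹ * α.1 h, hmemZ α h⟩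
        rw [← map_mul]
        congr 1
        apply Subtype.ext
        show (g*h)⁻¹ * α.1 (g*h) = (g⁻¹ * α.1 g) * (h⁻¹ * α.1 h)
        have hzc : h⁻¹ * (g⁻¹ * α.1 g) = (g⁻¹ * α.1 g) * h⁻¹ :=
          Subgroup.mem_center_iff.mp (hmemZ α g) h⁻¹
        calc (g*h)⁻¹ * α.1 (g*h) = h⁻¹ * (g⁻¹ * α.1 g) * α.1 h := by
              rw [map_mul]; group
          _ = (g⁻¹ * α.1 g) * h⁻¹ * α.1 h := by rw [hzc]
          _ = (g⁻¹ * α.1 g) * (h⁻¹ * α.1 h) := by rw [mul_assoc] }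
  have hker0 : ∀ α : Cstar, Subgroup.center G ≤ (fhom α).ker := by
    intro α z hz
    rw [MonoidHom.mem_ker]
    have h0 : (⟨z⁻¹ * α.1 z, hmemZ α z⟩ : Subgroup.center G) = 1 := by
      ext; simp [hfix α z hz]
    show e ⟨z⁻¹ * α.1 z, hmemZ α z⟩ = 1
    rw [h0, map_one]
  let F : Cstar → ((G ⧸ Subgroup.center G) →* Multiplicative ℤ) := fun α =>
    QuotientGroup.lift (Subgroup.center G) (fhom α) (hker0 α)
  have F_mk : ∀ (α : Cstar) (g : G),
      F α (QuotientGroup.mk g) = e ⟨g⁻¹ * α.1 g, hmemZ α g⟩ := fun α g => rfl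
  let zf : ((G ⧸ Subgroup.center G) →* Multiplicative ℤ) → G → G := fun f g =>
    ((e.symm (f (QuotientGroup.mk g)) : Subgroup.center G) : G)
  have zfZ : ∀ f g, zf f g ∈ Subgroup.center G := fun f g => (e.symm _).2
  have zfcomm : ∀ f g x, x * zf f g = zf f g * x := fun f g x =>
    Subgroup.mem_center_iff.mp (zfZ f g) x
  have zfcongr : ∀ f (g h : G),
      (QuotientGroup.mk g : G ⧸ Subgroup.center G) = QuotientGroup.mk h →
      zf f g = zf f h := by
    intro f g h hgh
    show ((e.symm (f (QuotientGroup.mk g)) : Subgroup.center G) : G) =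
      ((e.symm (f (QuotientGroup.mk h)) : Subgroup.center G) : G)
    rw [hgh]
  have zf_mul : ∀ f (g h : G), zf f (g * h) = zf f g * zf f h := by
    intro f g h
    show ((e.symm (f (QuotientGroup.mk (g * h))) : Subgroup.center G) : G) = _
    rw [QuotientGroup.mk_mul, map_mul, map_mul]
    rfl
  let θ : ((G ⧸ Subgroup.center G) →* Multiplicative ℤ) → MulAut G := fun f =>
    { toFun := fun g => g * zf f g
      invFun := fun g => g * (zf f g)⁻¹
      left_inv := by
        intro g
        show g * zf f g * (zf f (g * zf f g))⁻¹ = g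
        rw [zfcongr f (g * zf f g) g (by
          rw [QuotientGroup.mk_mul, (QuotientGroup.eq_one_iff (zf f g)).mpr (zfZ f g), mul_one])]
        exact mul_inv_cancel_right g (zf f g)
      right_inv := by
        intro g
        show g * (zf f g)⁻¹ * zf f (g * (zf f g)⁻¹) = g
        rw [zfcongr f (g * (zf f g)⁻¹) g (by
          rw [QuotientGroup.mk_mul, (QuotientGroup.eq_one_iff (zf f g)⁻¹).mpr (inv_mem (zfZ f g)),
            mul_one])]
        exact inv_mul_cancel_right g (zf f g)
      map_mul' := by
        intro g h
        show (g * h) * zf f (g * h) = (g * zf f g) * (h * zf f h)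
        rw [zf_mul]
        calc g * h * (zf f g * zf f h) = g * (h * zf f g) * zf f h := by
              simp [mul_assoc]
          _ = g * (zf f g * h) * zf f h := by rw [zfcomm f g h]
          _ = (g * zf f g) * (h * zf f h) := by simp [mul_assoc] }
  have θmem : ∀ f, θ f ∈ Cstar := by
    intro f
    rw [hC]
    constructor
    · intro g
      show g⁻¹ * (g * zf f g) ∈ Subgroup.center G
      rw [inv_mul_cancel_left]
      exact zfZ f g
    · intro z hz
      show z * zf f z = z
      have h1 : zf f z = 1 := by
        show ((e.symm (f (QuotientGroup.mk z)) : Subgroup.center G) : G) = 1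
        rw [(QuotientGroup.eq_one_iff z).mpr hz, map_one, map_one]
        rfl
      rw [h1, mul_one]
  let E1 : Cstar ≃* ((G ⧸ Subgroup.center G) →* Multiplicative ℤ) :=
    { toFun := F
      invFun := fun f => ⟨θ f, θmem f⟩
      left_inv := by
        intro α
        apply Subtype.ext
        refine MulEquiv.ext fun g => ?_
        show g * zf (F α) g = α.1 g
        show g * ((e.symm (F α (QuotientGroup.mk g)) : Subgroup.center G) : G) = α.1 g
        rw [F_mk, MulEquiv.symm_apply_apply]
        exact mul_inv_cancel_left g (α.1 g)
      right_inv := by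
        intro f
        refine MonoidHom.ext fun q => ?_
        induction q using QuotientGroup.induction_on with
        | H g =>
          rw [F_mk ⟨θ f, θmem f⟩ g]
          have h2 : (⟨g⁻¹ * (θ f).toFun g, hmemZ ⟨θ f, θmem f⟩ g⟩ : Subgroup.center G) =
              e.symm (f (QuotientGroup.mk g)) := by
            apply Subtype.ext
            show g⁻¹ * (g * zf f g) = zf f g
            rw [inv_mul_cancel_left]
          rw [show (⟨g⁻¹ * (⟨θ f, θmem f⟩ : Cstar).1 g, hmemZ ⟨θ f, θmem f⟩ g⟩ :
              Subgroup.center G) = e.symm (f (QuotientGroup.mk g)) from h2]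
          rw [MulEquiv.apply_symm_apply]
      map_mul' := by
        intro α β
        refine MonoidHom.ext fun q => ?_
        induction q using QuotientGroup.induction_on with
        | H g =>
          show F (α * β) (QuotientGroup.mk g) =
            F α (QuotientGroup.mk g) * F β (QuotientGroup.mk g)
          rw [F_mk, F_mk, F_mk, ← map_mul]
          congr 1
          apply Subtype.ext
          show g⁻¹ * ((α * β).1 g) = (g⁻¹ * α.1 g) * (g⁻¹ * β.1 g)
          have hab : (α * β).1 g = α.1 (β.1 g) := rfl
          have hb : β.1 g = g * (g⁻¹ * β.1 g) := by rw [mul_inv_cancel_left]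
          have h3 : α.1 (β.1 g) = α.1 g * (g⁻¹ * β.1 g) := by
            conv_lhs => rw [hb]
            rw [map_mul, hfix α _ (hmemZ β g)]
          rw [hab, h3, ← mul_assoc] }
  exact ⟨E1.trans (E2.trans E3)⟩
end

section
/- Let G be a finite non-abelian p-group such that Var(G) = Inn(G), where Var(G) is the group of autocentral automorphisms. Then the commutator subgroup G' is contained in the absolute center L(G), and L(G) is cyclic. -/
lemma aux_card_hom_ge {a m d : ℕ} (ha : a ≠ 0) (hm : m ≠ 0) (hda : d ∣ a) (hdm : d ∣ m) :
    d ≤ Nat.card (Multiplicative (ZMod a) →* Multiplicative (ZMod m)) := by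
  have hfin : Finite (Multiplicative (ZMod a) →* Multiplicative (ZMod m)) := by
    have : Finite (ZMod m) := by
      haveI : NeZero m := ⟨hm⟩; infer_instance
    have : Finite (ZMod a) := by
      haveI : NeZero a := ⟨ha⟩; infer_instance
    exact Finite.of_injective _ (DFunLike.coe_injective (F := Multiplicative (ZMod a) →* Multiplicative (ZMod m)))
  set c₀ : ZMod m := ((m / d : ℕ) : ZMod m) with hc₀
  have hdpos : 0 < d := Nat.pos_of_ne_zero (by rintro rfl; exact hm (Nat.eq_zero_of_zero_dvd hdm))
  have horder : addOrderOf c₀ = d := by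
    rw [hc₀, ZMod.addOrderOf_coe _ hm]
    rw [Nat.gcd_eq_right (Nat.div_dvd_of_dvd hdm)]
    exact Nat.div_div_self hdm hm
  have hsmul : ∀ k : Fin d, (a : ℤ) • ((k : ℕ) • c₀) = 0 := by
    intro k
    have h1 : (a : ℕ) • c₀ = 0 := by
      rw [hc₀, ← Nat.cast_smul_eq_nsmul (ZMod m)]
      rw [smul_eq_mul, ← Nat.cast_mul]
      have : m ∣ a * (m / d) := by
        obtain ⟨t, rfl⟩ := hda
        rw [Nat.mul_comm d t, Nat.mul_assoc, Nat.mul_div_cancel' hdm]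
        exact dvd_mul_left m t
      exact (ZMod.natCast_eq_zero_iff _ _).mpr this
    rw [smul_comm]
    simp only [natCast_zsmul, h1, smul_zero]
  set F : Fin d → (Multiplicative (ZMod a) →* Multiplicative (ZMod m)) :=
    fun k => AddMonoidHom.toMultiplicative
      (ZMod.lift a ⟨zmultiplesHom (ZMod m) ((k : ℕ) • c₀), hsmul k⟩) with hF
  have hinj : Function.Injective F := by
    intro k k' h
    have h2 : (ZMod.lift a ⟨zmultiplesHom (ZMod m) ((k : ℕ) • c₀), hsmul k⟩) =
        (ZMod.lift a ⟨zmultiplesHom (ZMod m) ((k' : ℕ) • c₀), hsmul k'⟩) :=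
      AddMonoidHom.toMultiplicative.injective h
    have e1 : ∀ (c : ZMod m) (h), (ZMod.lift a ⟨zmultiplesHom (ZMod m) c, h⟩) (((1 : ℤ) : ZMod a)) = c := by
      intro c h
      rw [ZMod.lift_coe]
      simp
    have h3 : (k : ℕ) • c₀ = (k' : ℕ) • c₀ := by
      rw [← e1 _ (hsmul k), ← e1 _ (hsmul k'), h2]
    have := nsmul_injOn_Iio_addOrderOf (x := c₀) (by simpa [horder] using k.2) (by simpa [horder] using k'.2) h3
    exact Fin.ext this
  calc d = Nat.card (Fin d) := by simp
  _ ≤ _ := Nat.card_le_card_of_injective F hinj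


def homPiEquiv {X : Type*} [MulOneClass X] {κ : Type*} [Fintype κ] (D : κ → Type*)
    [∀ j, CommMonoid (D j)] : (X →* ∀ j, D j) ≃ ∀ j, (X →* D j) where
  toFun φ j := (Pi.evalMonoidHom D j).comp φ
  invFun F := Pi.monoidHom F
  left_inv φ := by ext x; rfl
  right_inv F := by ext j x; rfl

lemma dvd_exponent' {ι G : Type*} [Finite ι] [CommGroup G] {n : ι → ℕ}
    (e : G ≃* ((i : ι) → Multiplicative (ZMod (n i)))) (i : ι) :
    n i ∣ Monoid.exponent G := by
  classical
  have : n i = orderOf (e.symm <| Pi.mulSingle i <| .ofAdd 1) := by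
    simpa only [MulEquiv.orderOf_eq, orderOf_piMulSingle, orderOf_ofAdd_eq_addOrderOf]
      using (ZMod.addOrderOf_one (n i)).symm
  exact this ▸ Monoid.order_dvd_exponent _

lemma lemX {p : ℕ} (hp : p.Prime) (A B : Type*) [CommGroup A] [CommGroup B] [Finite A] [Finite B]
    [Nontrivial A] (hpB : IsPGroup p B) (hBnc : ¬ IsCyclic B)
    (hexp : Monoid.exponent A ∣ Monoid.exponent B) :
    Nat.card A < Nat.card (A →* B) := by
  classical
  haveI : Fact p.Prime := ⟨hp⟩
  obtain ⟨ι, hι, n, hn, ⟨eA⟩⟩ := CommGroup.equiv_prod_multiplicative_zmod_of_finite A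
  obtain ⟨κ, hκ, m, hm, ⟨eB⟩⟩ := CommGroup.equiv_prod_multiplicative_zmod_of_finite B
  haveI : ∀ i, NeZero (n i) := fun i => ⟨by have := hn i; omega⟩
  haveI : ∀ j, NeZero (m j) := fun j => ⟨by have := hm j; omega⟩
  have hdvdA : ∀ i, n i ∣ Monoid.exponent A := fun i => dvd_exponent' eA i
  have hdvdB : ∀ j, m j ∣ Monoid.exponent B := fun j => dvd_exponent' eB j
  -- exponent of B is a p-power dividing card
  obtain ⟨kB, hkB⟩ := IsPGroup.iff_card.mp hpB
  have hexpBcard : Monoid.exponent B ∣ p ^ kB := by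
    haveI := Fintype.ofFinite B
    rw [← hkB, Nat.card_eq_fintype_card]
    exact Group.exponent_dvd_card
  have hppowB : ∀ j, ∃ e : ℕ, m j = p ^ e := by
    intro j
    obtain ⟨e, -, he⟩ := (Nat.dvd_prime_pow hp).mp ((hdvdB j).trans hexpBcard)
    exact ⟨e, he⟩
  have hppowA : ∀ i, ∃ e : ℕ, n i = p ^ e := by
    intro i
    obtain ⟨e, -, he⟩ := (Nat.dvd_prime_pow hp).mp (((hdvdA i).trans hexp).trans hexpBcard)
    exact ⟨e, he⟩
  -- index types
  haveI : Nonempty ι := by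
    by_contra h
    haveI : IsEmpty ι := not_nonempty_iff.mp h
    exact (not_subsingleton_iff_nontrivial.mpr ‹Nontrivial A›) eA.toEquiv.subsingleton
  haveI : Nonempty κ := by
    by_contra h
    haveI : IsEmpty κ := not_nonempty_iff.mp h
    haveI : Subsingleton B := eB.toEquiv.subsingleton
    exact hBnc isCyclic_of_subsingleton
  obtain ⟨j₀, hj₀⟩ := Finite.exists_max m
  have hdvd_j₀ : ∀ j, m j ∣ m j₀ := by
    intro j
    obtain ⟨e, he⟩ := hppowB j
    obtain ⟨e₀, he₀⟩ := hppowB j₀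
    rw [he, he₀]
    exact pow_dvd_pow p ((Nat.pow_le_pow_iff_right hp.one_lt).mp (by rw [← he, ← he₀]; exact hj₀ j))
  have hexpB_j₀ : Monoid.exponent B ∣ m j₀ := by
    refine Monoid.exponent_dvd_of_forall_pow_eq_one fun b => ?_
    apply eB.injective
    rw [map_pow, map_one]
    funext j
    have h1 : (eB b j) ^ (m j) = 1 := by
      have : (m j : ℕ) • (eB b j).toAdd = 0 := by
        rw [← Nat.cast_smul_eq_nsmul (ZMod (m j)), smul_eq_mul, ZMod.natCast_self, zero_mul]
      calc (eB b j) ^ (m j) = Multiplicative.ofAdd ((m j : ℕ) • (eB b j).toAdd) := rfl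
      _ = 1 := by rw [this]; rfl
    calc (eB b ^ m j₀) j = (eB b j) ^ (m j₀) := rfl
    _ = ((eB b j) ^ (m j)) ^ (m j₀ / m j) := by
        rw [← pow_mul, Nat.mul_div_cancel' (hdvd_j₀ j)]
    _ = 1 := by rw [h1, one_pow]
  obtain ⟨j₁, hj₁⟩ : ∃ j₁, j₁ ≠ j₀ := by
    by_contra h
    push_neg at h
    haveI : Unique κ := ⟨⟨j₀⟩, h⟩
    exact hBnc (isCyclic_of_surjective _
      ((eB.trans (MulEquiv.piUnique (fun j => Multiplicative (ZMod (m j))))).symm.surjective))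
  -- cardinalities
  have cardMulZMod : ∀ k : ℕ, k ≠ 0 → Nat.card (Multiplicative (ZMod k)) = k := by
    intro k hk
    haveI : NeZero k := ⟨hk⟩
    rw [Nat.card_congr Multiplicative.ofAdd.symm, Nat.card_zmod]
  have cardA : Nat.card A = ∏ i, n i := by
    rw [Nat.card_congr eA.toEquiv, Nat.card_pi]
    exact Finset.prod_congr rfl fun i _ => cardMulZMod (n i) (NeZero.ne _)
  set N : ι → κ → ℕ := fun i j =>
    Nat.card (Multiplicative (ZMod (n i)) →* Multiplicative (ZMod (m j))) with hN
  have cardHom : Nat.card (A →* B) = ∏ i, ∏ j, N i j := by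
    rw [Nat.card_congr (MulEquiv.monoidHomCongrLeft eA).toEquiv,
      Nat.card_congr (Pi.monoidHomMulEquiv (fun i => Multiplicative (ZMod (n i))) B).toEquiv,
      Nat.card_pi]
    refine Finset.prod_congr rfl fun i _ => ?_
    rw [Nat.card_congr (MulEquiv.monoidHomCongrRight (M := Multiplicative (ZMod (n i))) eB).toEquiv,
      Nat.card_congr (homPiEquiv (fun j => Multiplicative (ZMod (m j)))),
      Nat.card_pi]
  -- positivity / finiteness of hom sets
  have hNpos : ∀ i j, 0 < N i j := by
    intro i j
    haveI : Finite (Multiplicative (ZMod (n i)) →* Multiplicative (ZMod (m j))) :=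
      Finite.of_injective _
        (DFunLike.coe_injective (F := Multiplicative (ZMod (n i)) →* Multiplicative (ZMod (m j))))
    haveI : Nonempty (Multiplicative (ZMod (n i)) →* Multiplicative (ZMod (m j))) := ⟨1⟩
    exact Nat.card_pos
  have hbound1 : ∀ i, n i ≤ N i j₀ := fun i =>
    aux_card_hom_ge (NeZero.ne _) (NeZero.ne _) dvd_rfl ((hdvdA i).trans (hexp.trans hexpB_j₀))
  have hpdvdn : ∀ i, p ∣ n i := by
    intro i
    obtain ⟨e, he⟩ := hppowA i
    have : e ≠ 0 := by rintro rfl; rw [pow_zero] at he; have := hn i; omega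
    exact he ▸ dvd_pow_self p this
  have hpdvdm : ∀ j, p ∣ m j := by
    intro j
    obtain ⟨e, he⟩ := hppowB j
    have : e ≠ 0 := by rintro rfl; rw [pow_zero] at he; have := hm j; omega
    exact he ▸ dvd_pow_self p this
  have hbound2 : ∀ i, p ≤ N i j₁ := fun i =>
    aux_card_hom_ge (NeZero.ne _) (NeZero.ne _) (hpdvdn i) (hpdvdm j₁)
  have hrow : ∀ i, n i ≤ ∏ j, N i j := fun i =>
    le_trans (hbound1 i) (Finset.single_le_prod' (fun j _ => hNpos i j) (Finset.mem_univ j₀))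
  obtain ⟨i₀⟩ := ‹Nonempty ι›
  have hrow₀ : n i₀ * p ≤ ∏ j, N i₀ j := by
    have h2 : N i₀ j₀ * N i₀ j₁ ≤ ∏ j, N i₀ j := by
      have := Finset.prod_le_prod_of_subset_of_one_le'
        (Finset.subset_univ ({j₀, j₁} : Finset κ)) (fun j _ _ => Nat.succ_le_of_lt (hNpos i₀ j))
      rwa [Finset.prod_pair (Ne.symm hj₁)] at this
    exact le_trans (Nat.mul_le_mul (hbound1 i₀) (hbound2 i₀)) h2
  rw [cardA, cardHom]
  have hpe : 0 < ∏ i ∈ Finset.univ.erase i₀, n i :=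
    Finset.prod_pos fun i _ => by have := hn i; omega
  calc ∏ i, n i = n i₀ * ∏ i ∈ Finset.univ.erase i₀, n i :=
        (Finset.mul_prod_erase Finset.univ n (Finset.mem_univ i₀)).symm
  _ < (n i₀ * p) * ∏ i ∈ Finset.univ.erase i₀, n i := by
      have h3 : n i₀ < n i₀ * p := by
        have h4 := hn i₀
        have h5 := hp.two_le
        exact (lt_mul_iff_one_lt_right (by omega)).mpr (by omega)
      exact mul_lt_mul_of_pos_right h3 hpe
  _ ≤ (∏ j, N i₀ j) * ∏ i ∈ Finset.univ.erase i₀, ∏ j, N i j :=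
      Nat.mul_le_mul hrow₀ (Finset.prod_le_prod (fun i _ => Nat.zero_le _) (fun i _ => hrow i))
  _ = ∏ i, ∏ j, N i j :=
      Finset.mul_prod_erase Finset.univ (fun i => ∏ j, N i j) (Finset.mem_univ i₀)


/-- The absolute center `L(G) = {g ∈ G : α(g) = g for all α ∈ Aut(G)}`. -/
def absoluteCenter (G : Type*) [Group G] : Subgroup G where
  carrier := {g | ∀ α : MulAut G, α g = g}
  one_mem' := fun α => map_one α
  mul_mem' := by
    intro a b ha hb α
    rw [map_mul, ha α, hb α]
  inv_mem' := by
    intro a ha α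
    rw [map_inv, ha α]

/-- Let `G` be a finite non-abelian `p`-group with `Var(G) = Inn(G)`, where `Var(G)` is the
group of autocentral automorphisms.  Then `G' ≤ L(G)` and `L(G)` is cyclic. -/
theorem stmt_9 (p : ℕ) [Fact p.Prime] (G : Type*) [Group G] [Finite G]
    (hp : IsPGroup p G) (hnab : ∃ a b : G, a * b ≠ b * a)
    (V : Subgroup (MulAut G))
    (hV : ∀ α : MulAut G, α ∈ V ↔ ∀ g : G, g⁻¹ * α g ∈ absoluteCenter G)
    (heq : V = (MulAut.conj : G →* MulAut G).range) :
    commutator G ≤ absoluteCenter G ∧ IsCyclic (absoluteCenter G) := by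
  classical
  have hLZ : absoluteCenter G ≤ Subgroup.center G := by
    intro z hz
    rw [Subgroup.mem_center_iff]
    intro g
    have h1 := hz (MulAut.conj g)
    rw [MulAut.conj_apply] at h1
    calc g * z = g * z * g⁻¹ * g := by group
    _ = z * g := by rw [h1]
  have hconj : ∀ x g : G, g⁻¹ * (x * g * x⁻¹) ∈ absoluteCenter G := by
    intro x g
    have hx : MulAut.conj x ∈ V := by rw [heq]; exact ⟨x, rfl⟩
    have h2 := (hV _).mp hx g
    rw [MulAut.conj_apply] at h2
    exact h2
  have part1 : commutator G ≤ absoluteCenter G := by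
    rw [commutator_def, Subgroup.commutator_le]
    intro a _ b _
    have h := (absoluteCenter G).inv_mem (hconj a b⁻¹)
    rw [commutatorElement_def]
    convert h using 1
    group
  refine ⟨part1, ?_⟩
  by_contra hcyc
  -- quotient by center is commutative
  have hcomm_aux : ∀ x y : G, ((x * y : G) : G ⧸ Subgroup.center G) = ((y * x : G) : _) := by
    intro x y
    rw [QuotientGroup.eq]
    open scoped commutatorElement in
    have h3 : (x * y)⁻¹ * (y * x) = ⁅y⁻¹, x⁻¹⁆ := by rw [commutatorElement_def]; group
    rw [h3]
    exact hLZ (part1 (Subgroup.commutator_mem_commutator (Subgroup.mem_top _) (Subgroup.mem_top _)))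
  letI commQ : CommGroup (G ⧸ Subgroup.center G) :=
    { (inferInstance : Group (G ⧸ Subgroup.center G)) with
      mul_comm := by
        intro a b
        induction a using QuotientGroup.induction_on
        induction b using QuotientGroup.induction_on
        rename_i x y
        rw [← QuotientGroup.mk_mul, ← QuotientGroup.mk_mul]
        exact hcomm_aux x y }
  letI commL : CommGroup ↥(absoluteCenter G) :=
    { (inferInstance : Group ↥(absoluteCenter G)) with
      mul_comm := by
        intro a b
        apply Subtype.ext
        rw [Subgroup.coe_mul, Subgroup.coe_mul]
        exact Subgroup.mem_center_iff.mp (hLZ b.2) a.1 }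
  haveI : Nontrivial (G ⧸ Subgroup.center G) := by
    obtain ⟨a, b, hab⟩ := hnab
    refine nontrivial_of_ne ((a : G) : G ⧸ Subgroup.center G) 1 ?_
    rw [Ne, QuotientGroup.eq_one_iff]
    intro h
    exact hab (Subgroup.mem_center_iff.mp h b).symm
  have hpQ : IsPGroup p (G ⧸ Subgroup.center G) := hp.to_quotient _
  have hpL : IsPGroup p ↥(absoluteCenter G) := hp.to_subgroup (absoluteCenter G)
  -- exponent divisibility
  set nL := Monoid.exponent ↥(absoluteCenter G) with hnL
  have hxn : ∀ x : G, x ^ nL ∈ Subgroup.center G := by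
    intro x
    rw [Subgroup.mem_center_iff]
    intro g
    have hcent : ∀ y : G, g⁻¹ * (y * g * y⁻¹) ∈ Subgroup.center G := fun y => hLZ (hconj y g)
    have key : ∀ k : ℕ, g⁻¹ * (x ^ k * g * (x ^ k)⁻¹) = (g⁻¹ * (x * g * x⁻¹)) ^ k := by
      intro k
      induction k with
      | zero => simp
      | succ k ih =>
        have hcw : (x⁻¹) * (g⁻¹ * (x ^ k * g * (x ^ k)⁻¹)) = (g⁻¹ * (x ^ k * g * (x ^ k)⁻¹)) * x⁻¹ :=
          Subgroup.mem_center_iff.mp (hcent (x ^ k)) x⁻¹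
        rw [pow_succ' x k, pow_succ' (g⁻¹ * (x * g * x⁻¹)) k, ← ih]
        calc g⁻¹ * (x * x ^ k * g * (x * x ^ k)⁻¹)
            = g⁻¹ * x * g * ((g⁻¹ * (x ^ k * g * (x ^ k)⁻¹)) * x⁻¹) := by group
        _ = g⁻¹ * x * g * (x⁻¹ * (g⁻¹ * (x ^ k * g * (x ^ k)⁻¹))) := by rw [← hcw]
        _ = (g⁻¹ * (x * g * x⁻¹)) * (g⁻¹ * (x ^ k * g * (x ^ k)⁻¹)) := by group
    have hc1 : g⁻¹ * (x * g * x⁻¹) ∈ absoluteCenter G := hconj x g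
    have hpow : ((⟨g⁻¹ * (x * g * x⁻¹), hc1⟩ : ↥(absoluteCenter G)) : ↥(absoluteCenter G)) ^ nL = 1 :=
      Monoid.pow_exponent_eq_one _
    have h1 : (g⁻¹ * (x * g * x⁻¹)) ^ nL = 1 := by
      have := congrArg (Subtype.val) hpow
      simpa using this
    have h2 := key nL
    rw [h1, inv_mul_eq_one] at h2
    calc g * x ^ nL = (x ^ nL * g * (x ^ nL)⁻¹) * x ^ nL := by rw [← h2]
    _ = x ^ nL * g := by group
  have hexpQ : Monoid.exponent (G ⧸ Subgroup.center G) ∣ nL := by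
    refine Monoid.exponent_dvd_of_forall_pow_eq_one fun q => ?_
    induction q using QuotientGroup.induction_on
    rename_i x
    have : ((x : G ⧸ Subgroup.center G)) ^ nL = ((x ^ nL : G) : G ⧸ Subgroup.center G) := rfl
    rw [this, QuotientGroup.eq_one_iff]
    exact hxn x
  -- the injection from homs to the central quotient
  have key2 : ∀ F : (G ⧸ Subgroup.center G) →* ↥(absoluteCenter G),
      ∃ x : G, ∀ g : G, g * ((F ((g : G ⧸ Subgroup.center G)) : G)) = x * g * x⁻¹ := by
    intro F
    set f : G → G := fun g => ((F ((g : G ⧸ Subgroup.center G)) : G)) with hf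
    have hfL : ∀ g, f g ∈ absoluteCenter G := fun g => (F _).2
    have hfZ : ∀ z ∈ Subgroup.center G, f z = 1 := by
      intro z hz
      have : ((z : G ⧸ Subgroup.center G)) = 1 := (QuotientGroup.eq_one_iff _).mpr hz
      simp only [hf, this, map_one, OneMemClass.coe_one]
    have hfmul : ∀ a b : G, f (a * b) = f a * f b := by
      intro a b
      simp only [hf, QuotientGroup.mk_mul, map_mul, Subgroup.coe_mul]
    let e : G →* G :=
      { toFun := fun g => g * f g
        map_one' := by simp [hfZ 1 (Subgroup.one_mem _)]
        map_mul' := by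
          intro a b
          have hc := Subgroup.mem_center_iff.mp (hLZ (hfL a)) b
          simp only [hfmul]
          calc a * b * (f a * f b) = a * (b * f a) * f b := by group
          _ = a * (f a * b) * f b := by rw [hc]
          _ = a * f a * (b * f b) := by group }
    have heg : ∀ g, e g = g * f g := fun g => rfl
    have hinj : Function.Injective e := by
      rw [injective_iff_map_eq_one]
      intro g hg
      rw [heg] at hg
      have hgL : g ∈ absoluteCenter G := by
        have h7 : g = (f g)⁻¹ := by rw [eq_inv_iff_mul_eq_one]; exact hg
        rw [h7]; exact (absoluteCenter G).inv_mem (hfL g)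
      have h8 : f g = 1 := hfZ g (hLZ hgL)
      rwa [h8, mul_one] at hg
    have hbij := Finite.injective_iff_bijective.mp hinj
    set α := MulEquiv.ofBijective e hbij with hα
    have hαg : ∀ g, α g = g * f g := fun g => rfl
    have hαV : α ∈ V := by
      rw [hV]
      intro g
      rw [hαg]
      have h9 : g⁻¹ * (g * f g) = f g := by group
      rw [h9]; exact hfL g
    rw [heq] at hαV
    obtain ⟨x, hx⟩ := hαV
    refine ⟨x, fun g => ?_⟩
    have h10 := congrArg (fun (φ : MulAut G) => φ g) hx
    simp only [MulAut.conj_apply] at h10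
    rw [← hαg g, ← h10]
  -- the injection
  haveI : Finite ((G ⧸ Subgroup.center G) →* ↥(absoluteCenter G)) :=
    Finite.of_injective _
      (DFunLike.coe_injective (F := (G ⧸ Subgroup.center G) →* ↥(absoluteCenter G)))
  set Ψ : ((G ⧸ Subgroup.center G) →* ↥(absoluteCenter G)) → (G ⧸ Subgroup.center G) :=
    fun F => ((Classical.choose (key2 F) : G) : G ⧸ Subgroup.center G) with hΨ
  have hΨinj : Function.Injective Ψ := by
    intro F1 F2 h12
    have hx1 := Classical.choose_spec (key2 F1)
    have hx2 := Classical.choose_spec (key2 F2)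
    set x1 := Classical.choose (key2 F1) with hdef1
    set x2 := Classical.choose (key2 F2) with hdef2
    have hz : x1⁻¹ * x2 ∈ Subgroup.center G := (QuotientGroup.eq).mp h12
    have hzc := Subgroup.mem_center_iff.mp hz
    have hxx : ∀ g : G, x1 * g * x1⁻¹ = x2 * g * x2⁻¹ := by
      intro g
      have h13 : x2 * g * x2⁻¹ = x1 * ((x1⁻¹ * x2) * g) * x2⁻¹ := by group
      rw [h13, ← hzc g]
      group
    refine MonoidHom.ext fun q => ?_
    induction q using QuotientGroup.induction_on
    rename_i g
    apply Subtype.ext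
    have e1 := hx1 g
    have e2 := hx2 g
    rw [hxx g, ← e2] at e1
    exact mul_left_cancel e1
  have hineq1 : Nat.card ((G ⧸ Subgroup.center G) →* ↥(absoluteCenter G)) ≤
      Nat.card (G ⧸ Subgroup.center G) := Nat.card_le_card_of_injective Ψ hΨinj
  have hineq2 := lemX (Fact.out : p.Prime) (G ⧸ Subgroup.center G) ↥(absoluteCenter G)
    hpL hcyc hexpQ
  omega
end

section
/- Let G be a group with G* ≤ L(G), where G* is the autocommutator subgroup and L(G) is the absolute center (i.e., G is autonilpotent of class at most 2). Then the exponent of G/L(G) equals the exponent of G*. -/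
instance absoluteCenter_normal (G : Type*) [Group G] : (absoluteCenter G).Normal := by
  constructor
  intro g hg n
  have h : n * g * n⁻¹ = g := by simpa using hg (MulAut.conj n)
  rw [h]; exact hg

/-- The autocommutator subgroup `G* = ⟨g⁻¹α(g) : g ∈ G, α ∈ Aut(G)⟩`. -/
def autocommutator (G : Type*) [Group G] : Subgroup G :=
  Subgroup.closure {x : G | ∃ (g : G) (α : MulAut G), x = g⁻¹ * α g}

lemma abs_center_comm {G : Type*} [Group G] {x : G} (hx : x ∈ absoluteCenter G) (y : G) :
    Commute x y := by
  have := hx (MulAut.conj y)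
  simp only [MulAut.conj_apply] at this
  have : y * x = x * y := by
    have := congrArg (· * y) this
    simpa [mul_assoc] using this
  exact this.symm

lemma key_pow {G : Type*} [Group G] (h : autocommutator G ≤ absoluteCenter G)
    (g : G) (α : MulAut G) (n : ℕ) : α (g ^ n) = g ^ n * (g⁻¹ * α g) ^ n := by
  have hc : g⁻¹ * α g ∈ absoluteCenter G :=
    h (Subgroup.subset_closure ⟨g, α, rfl⟩)
  induction n with
  | zero => simp
  | succ n ih =>
    have hcm : Commute ((g⁻¹ * α g) ^ n) g := ((abs_center_comm hc g).pow_left n)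
    calc α (g ^ (n+1)) = α (g ^ n) * α g := by rw [pow_succ, map_mul]
    _ = g ^ n * (g⁻¹ * α g) ^ n * (g * (g⁻¹ * α g)) := by rw [ih]; group
    _ = g ^ (n+1) * (g⁻¹ * α g) ^ (n+1) := by
        rw [pow_succ, pow_succ, mul_assoc, ← mul_assoc ((g⁻¹ * α g) ^ n), hcm.eq]
        group

/-- If `G* ≤ L(G)` (i.e. `G` is autonilpotent of class at most 2), then the exponent of
`G/L(G)` equals the exponent of `G*`. -/
theorem stmt_11 (G : Type*) [Group G] (h : autocommutator G ≤ absoluteCenter G) :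
    Monoid.exponent (G ⧸ absoluteCenter G) = Monoid.exponent (autocommutator G) := by
  apply Nat.dvd_antisymm
  · rw [Monoid.exponent_dvd_iff_forall_pow_eq_one]
    intro q
    obtain ⟨g, rfl⟩ := QuotientGroup.mk_surjective q
    set n := Monoid.exponent (autocommutator G)
    have : (g : G) ^ n ∈ absoluteCenter G := by
      intro α
      rw [key_pow h g α n]
      have hc : g⁻¹ * α g ∈ autocommutator G := Subgroup.subset_closure ⟨g, α, rfl⟩
      have : (⟨g⁻¹ * α g, hc⟩ : autocommutator G) ^ n = 1 := Monoid.pow_exponent_eq_one _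
      have : (g⁻¹ * α g) ^ n = 1 := by
        simpa [← Subgroup.coe_pow] using congrArg Subtype.val this
      rw [this, mul_one]
    calc (QuotientGroup.mk g : G ⧸ absoluteCenter G) ^ n = QuotientGroup.mk (g ^ n) := rfl
    _ = 1 := (QuotientGroup.eq_one_iff _).2 this
  · rw [Monoid.exponent_dvd_iff_forall_pow_eq_one]
    set m := Monoid.exponent (G ⧸ absoluteCenter G) with hm
    have key : ∀ y ∈ autocommutator G, y ^ m = 1 := by
      intro y hy
      induction hy using Subgroup.closure_induction with
      | mem y hy =>
        obtain ⟨g, α, rfl⟩ := hy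
        have hq : (QuotientGroup.mk g : G ⧸ absoluteCenter G) ^ m = 1 :=
          Monoid.pow_exponent_eq_one _
        have hgm : (g : G) ^ m ∈ absoluteCenter G := by
          rw [← QuotientGroup.eq_one_iff]; exact hq
        have h2 := hgm α
        rw [key_pow h g α m] at h2
        exact mul_left_cancel (a := g ^ m) (by rw [h2, mul_one])
      | one => simp
      | mul a b ha hb pa pb =>
        have hab : Commute a b := abs_center_comm (h ha) b
        rw [hab.mul_pow, pa, pb, one_mul]
      | inv a ha pa => rw [inv_pow, pa, inv_one]
    intro x
    ext
    push_cast
    exact key x x.2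
end

section
/- Let G be a non-abelian finite p-group that is autonilpotent of class 2 (G* ≤ L(G)), with L(G) = Z(G) and L(G) cyclic. Then Var(G) = Inn(G). -/
theorem aux_inner {G : Type*} [Group G] [Finite G]
    (h1 : autocommutator G ≤ absoluteCenter G)
    (h2 : absoluteCenter G = Subgroup.center G)
    (h3 : IsCyclic (absoluteCenter G)) (α : MulAut G) :
    ∃ x : G, MulAut.conj x = α := by
  classical
  set Z := Subgroup.center G with hZdef
  letI : CommGroup Z := { (inferInstance : Group Z) with
    mul_comm := fun a b => Subtype.ext (Subgroup.mem_center_iff.mp a.2 b).symm }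
  have hmem : ∀ (β : MulAut G) (g : G), g⁻¹ * β g ∈ Z := fun β g =>
    h2 ▸ h1 (Subgroup.subset_closure ⟨g, β, rfl⟩)
  have hfix : ∀ (β : MulAut G) (z : G), z ∈ Z → β z = z := by
    intro β z hz
    have hz' : z ∈ absoluteCenter G := by rw [h2]; exact hz
    exact hz' β
  -- the homomorphism `β ↦ (g ↦ g⁻¹ β g)` from `MulAut G` to `G →* Z`
  have fhom_mul : ∀ (β : MulAut G) (g h : G),
      (g * h)⁻¹ * β (g * h) = (g⁻¹ * β g) * (h⁻¹ * β h) := by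
    intro β g h
    have hc := Subgroup.mem_center_iff.mp (hmem β g) h⁻¹
    rw [map_mul, mul_inv_rev]
    calc h⁻¹ * g⁻¹ * (β g * β h) = h⁻¹ * (g⁻¹ * β g) * β h := by group
      _ = (g⁻¹ * β g) * h⁻¹ * β h := by rw [hc]
      _ = (g⁻¹ * β g) * (h⁻¹ * β h) := by group
  let F : MulAut G →* (G →* Z) :=
    { toFun := fun β =>
        { toFun := fun g => ⟨g⁻¹ * β g, hmem β g⟩
          map_one' := by ext; simp
          map_mul' := fun g h => by ext; exact fhom_mul β g h }
      map_one' := by ext g; simp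
      map_mul' := by
        intro β γ
        ext g
        show g⁻¹ * β (γ g) = (g⁻¹ * β g) * (g⁻¹ * γ g)
        have h1' : γ g = g * (g⁻¹ * γ g) := by group
        rw [h1', map_mul, hfix β _ (hmem γ g)]
        group }
  have hker : ∀ β : MulAut G, Z ≤ (F β).ker := by
    intro β z hz
    have : (F β) z = 1 := by
      ext
      show z⁻¹ * β z = 1
      rw [hfix β z hz]; group
    exact this
  let Q := G ⧸ Z
  letI : CommGroup Q :=
    { (inferInstance : Group Q) with
      mul_comm := by
        intro a b
        induction a using QuotientGroup.induction_on with | H x =>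
        induction b using QuotientGroup.induction_on with | H y =>
        show ((x : Q) * y) = (y : Q) * x
        rw [← QuotientGroup.mk_mul, ← QuotientGroup.mk_mul, QuotientGroup.eq]
        have := hmem (MulAut.conj x⁻¹) y
        simpa [MulAut.conj_apply, mul_assoc] using this }
  let Fbar : MulAut G → (Q →* Z) := fun β => QuotientGroup.lift Z (F β) (hker β)
  have Fbar_mk : ∀ (β : MulAut G) (g : G),
      Fbar β (g : Q) = ⟨g⁻¹ * β g, hmem β g⟩ := fun β g => rfl
  let B' : G →* (Q →* Z) :=
    { toFun := fun x => Fbar (MulAut.conj x)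
      map_one' := by
        refine DFunLike.ext _ _ fun q => ?_
        induction q using QuotientGroup.induction_on with | H g =>
        rw [Fbar_mk]
        simp
      map_mul' := by
        intro x y
        refine DFunLike.ext _ _ fun q => Subtype.ext ?_
        induction q using QuotientGroup.induction_on with | H g =>
        show ((Fbar (MulAut.conj (x * y)) (g : Q) : Z) : G) =
          ((Fbar (MulAut.conj x) (g : Q) * Fbar (MulAut.conj y) (g : Q) : Z) : G)
        rw [Fbar_mk]
        have hu := Subgroup.mem_center_iff.mp (hmem (MulAut.conj y) g) x⁻¹
        simp only [Fbar_mk, Subgroup.coe_mul, MulAut.conj_apply] at hu ⊢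
        calc g⁻¹ * (x * y * g * (x * y)⁻¹)
            = g⁻¹ * (x * g * ((g⁻¹ * (y * g * y⁻¹)) * x⁻¹)) := by group
          _ = g⁻¹ * (x * g * (x⁻¹ * (g⁻¹ * (y * g * y⁻¹)))) := by rw [← hu]
          _ = g⁻¹ * (x * g * x⁻¹) * (g⁻¹ * (y * g * y⁻¹)) := by group }
  have hB'ker : Z ≤ B'.ker := by
    intro x hx
    have hx1 : MulAut.conj x = 1 := by
      ext g
      simp [MulAut.conj_apply, (Subgroup.mem_center_iff.mp hx g).symm]
    show Fbar (MulAut.conj x) = 1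
    rw [hx1]
    refine DFunLike.ext _ _ fun q => ?_
    induction q using QuotientGroup.induction_on with | H g =>
    rw [Fbar_mk]
    simp
  let B : Q →* (Q →* Z) := QuotientGroup.lift Z B' hB'ker
  have B_eval : ∀ x g : G, ((B (x : Q) (g : Q) : Z) : G) = g⁻¹ * (x * g * x⁻¹) := by
    intro x g
    show ((Fbar (MulAut.conj x) (g : Q) : Z) : G) = _
    rw [Fbar_mk]
    simp [MulAut.conj_apply]
  have hinj : Function.Injective B := by
    rw [injective_iff_map_eq_one]
    intro q hq
    induction q using QuotientGroup.induction_on with | H x =>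
    rw [QuotientGroup.eq_one_iff]
    rw [Subgroup.mem_center_iff]
    intro g
    have := congrArg (fun f : Q →* Z => ((f (g : Q) : Z) : G)) hq
    rw [B_eval] at this
    simp at this
    have : x * g * x⁻¹ = g := by
      have h' : g * (g⁻¹ * (x * g * x⁻¹)) = g * 1 := by rw [this]
      group at h'
      simpa [mul_assoc] using h'
    calc g * x = (x * g * x⁻¹) * x := by rw [this]
      _ = x * g := by group
  -- exponent of Q divides card Z
  have hexp : Monoid.exponent Q ∣ Nat.card Z := by
    apply Monoid.exponent_dvd_of_forall_pow_eq_one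
    intro q
    apply hinj
    rw [map_pow, map_one]
    refine DFunLike.ext _ _ fun q' => ?_
    rw [MonoidHom.pow_apply]
    simp [pow_card_eq_one']
  haveI hZcyc : IsCyclic Z := h2 ▸ h3
  haveI : NeZero (Nat.card Z) := ⟨Nat.card_pos.ne'⟩
  haveI : IsCyclic (Zˣ) := isCyclic_of_surjective (toUnits (G := Z)) toUnits.surjective
  haveI : HasEnoughRootsOfUnity Z (Nat.card Z) :=
    { prim := by
        obtain ⟨g, hg⟩ := IsCyclic.exists_generator (α := Z)
        exact ⟨g, (orderOf_eq_card_of_forall_mem_zpowers hg) ▸ IsPrimitiveRoot.orderOf g⟩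
      cyc := inferInstance }
  haveI : HasEnoughRootsOfUnity Z (Monoid.exponent Q) := HasEnoughRootsOfUnity.of_dvd _ hexp
  obtain ⟨e1⟩ := CommGroup.monoidHom_mulEquiv_of_hasEnoughRootsOfUnity Q Z
  let e2 : (Q →* Z) ≃* (Q →* Zˣ) := MulEquiv.monoidHomCongrRight toUnits
  haveI : Finite (Q →* Z) := Finite.of_injective _ (DFunLike.coe_injective (F := Q →* Z))
  have hcard : Nat.card Q = Nat.card (Q →* Z) := (Nat.card_congr (e2.trans e1).toEquiv).symm
  have hbij : Function.Bijective B := (Nat.bijective_iff_injective_and_card B).mpr ⟨hinj, hcard⟩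
  obtain ⟨q, hq⟩ := hbij.surjective (Fbar α)
  obtain ⟨x, rfl⟩ := QuotientGroup.mk_surjective q
  refine ⟨x, ?_⟩
  ext g
  have := congrArg (fun f : Q →* Z => ((f (g : Q) : Z) : G)) hq
  rw [B_eval, Fbar_mk] at this
  simp only [MulAut.conj_apply]
  exact mul_left_cancel this

/-- Let `G` be a non-abelian finite `p`-group that is autonilpotent of class 2
(`G* ≤ L(G)`), with `L(G) = Z(G)` and `L(G)` cyclic.  Then `Var(G) = Inn(G)`. -/
theorem stmt_12 (p : ℕ) [Fact p.Prime] (G : Type*) [Group G] [Finite G]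
    (hp : IsPGroup p G) (hnab : ∃ a b : G, a * b ≠ b * a)
    (h1 : autocommutator G ≤ absoluteCenter G)
    (h2 : absoluteCenter G = Subgroup.center G)
    (h3 : IsCyclic (absoluteCenter G))
    (V : Subgroup (MulAut G))
    (hV : ∀ α : MulAut G, α ∈ V ↔ ∀ g : G, g⁻¹ * α g ∈ absoluteCenter G) :
    V = (MulAut.conj : G →* MulAut G).range := by
  ext α
  rw [hV]
  constructor
  · intro _
    obtain ⟨x, hx⟩ := aux_inner h1 h2 h3 α
    exact ⟨x, hx⟩
  · intro _ g
    exact h1 (Subgroup.subset_closure ⟨g, α, rfl⟩)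
end

section
/- Let G be a finite non-abelian p-group. If the group C* of central automorphisms fixing Z(G) elementwise equals Inn(G), then G is nilpotent of class 2 and Z(G) is cyclic. -/
open Subgroup Function
open scoped commutatorElement

section count
variable {B : Type*} [CommGroup B]

/-- The hom `Multiplicative (ZMod m) →* B` sending the generator to `b`, given `b ^ m = 1`. -/
noncomputable def homOfPow (m : ℕ) (b : B) (hb : b ^ m = 1) : Multiplicative (ZMod m) →* B :=
  AddMonoidHom.toMultiplicativeLeft
    (ZMod.lift m ⟨zmultiplesHom (Additive B) (Additive.ofMul b), by
      rw [zmultiplesHom_apply, ← ofMul_zpow, zpow_natCast, hb]; rfl⟩)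

lemma homOfPow_apply_one (m : ℕ) (b : B) (hb : b ^ m = 1) :
    homOfPow m b hb (Multiplicative.ofAdd (1 : ZMod m)) = b := by
  have h1 : (1 : ZMod m) = ((1 : ℤ) : ZMod m) := by norm_cast
  simp only [homOfPow, AddMonoidHom.coe_toMultiplicativeLeft, Function.comp_apply]
  rw [toAdd_ofAdd, h1, ZMod.lift_coe]
  simp

lemma sol_card_le_hom (m : ℕ) [NeZero m] [Finite B] :
    Nat.card {b : B // b ^ m = 1} ≤ Nat.card (Multiplicative (ZMod m) →* B) := by
  have hinj : Injective (fun b : {b : B // b ^ m = 1} => homOfPow m b.1 b.2) := by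
    intro x y hxy
    have := congrArg (fun f : Multiplicative (ZMod m) →* B => f (Multiplicative.ofAdd 1)) hxy
    simp only [homOfPow_apply_one] at this
    exact Subtype.ext this
  have : Finite (Multiplicative (ZMod m) →* B) :=
    Finite.of_injective (fun f => (f : Multiplicative (ZMod m) → B))
      (fun f g h => MonoidHom.ext (congrFun h))
  exact Nat.card_le_card_of_injective _ hinj

lemma dvd_le_sol (n m d : ℕ) [NeZero n] (hdn : d ∣ n) (hdm : d ∣ m) :
    d ≤ Nat.card {x : Multiplicative (ZMod n) // x ^ m = 1} := by
  obtain ⟨a, ha⟩ := hdn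
  obtain ⟨e, he⟩ := hdm
  have hd0 : d ≠ 0 := by rintro rfl; exact (NeZero.ne n) (by simpa using ha)
  set g : Multiplicative (ZMod n) := Multiplicative.ofAdd ((a : ℕ) : ZMod n) with hg
  have horder : orderOf g = d := by
    rw [hg, orderOf_ofAdd_eq_addOrderOf, ZMod.addOrderOf_coe a (NeZero.ne n)]
    have hgcd : n.gcd a = a := Nat.gcd_eq_right ⟨d, by rw [ha, mul_comm]⟩
    have ha0 : 0 < a := Nat.pos_of_ne_zero (by rintro rfl; exact (NeZero.ne n) (by simpa using ha))
    rw [hgcd, ha, Nat.mul_div_cancel _ ha0]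
  have hgm : g ^ m = 1 := by
    rw [hg, ← ofAdd_nsmul]
    have : (m • ((a : ℕ) : ZMod n)) = (((m * a : ℕ) : ZMod n)) := by push_cast; ring
    rw [this]
    have : (n : ℕ) ∣ m * a := ⟨e, by rw [he, ha]; ring⟩
    rw [(ZMod.natCast_eq_zero_iff _ _).mpr this]
    rfl
  have hinj : Injective (fun x : Subgroup.zpowers g =>
      (⟨x.1, by obtain ⟨x, k, rfl⟩ := x; rw [← zpow_natCast, ← zpow_mul, mul_comm, zpow_mul,
        zpow_natCast, hgm, one_zpow]⟩ : {x : Multiplicative (ZMod n) // x ^ m = 1})) := by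
    intro x y hxy
    exact Subtype.ext (by simpa using congrArg Subtype.val hxy)
  calc d = Nat.card (Subgroup.zpowers g) := by rw [Nat.card_zpowers, horder]
    _ ≤ _ := Nat.card_le_card_of_injective _ hinj

end count

lemma card_mult_zmod (n : ℕ) : Nat.card (Multiplicative (ZMod n)) = n := by
  rw [Nat.card_congr Multiplicative.ofAdd.symm, Nat.card_zmod]

lemma card_lt_card_hom {p : ℕ} (hp : p.Prime) (A B : Type*) [CommGroup A] [CommGroup B]
    [Finite A] [Finite B] [Nontrivial A]
    (hpA : IsPGroup p A) (hpB : IsPGroup p B) (hBnc : ¬ IsCyclic B)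
    (hexp : Monoid.exponent A ∣ Monoid.exponent B) :
    Nat.card A < Nat.card (A →* B) := by
  classical
  haveI := Fact.mk hp
  obtain ⟨ι, hι, nA, h1A, ⟨eA⟩⟩ := CommGroup.equiv_prod_multiplicative_zmod_of_finite A
  obtain ⟨κ, hκ, nB, h1B, ⟨eB⟩⟩ := CommGroup.equiv_prod_multiplicative_zmod_of_finite B
  haveI : ∀ i, NeZero (nA i) := fun i => ⟨by have := h1A i; omega⟩
  haveI : ∀ j, NeZero (nB j) := fun j => ⟨by have := h1B j; omega⟩
  have hcardA : Nat.card A = ∏ i, nA i := by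
    rw [Nat.card_congr eA.toEquiv, Nat.card_pi]
    exact Finset.prod_congr rfl fun i _ => card_mult_zmod (nA i)
  have hcardB : Nat.card B = ∏ j, nB j := by
    rw [Nat.card_congr eB.toEquiv, Nat.card_pi]
    exact Finset.prod_congr rfl fun j _ => card_mult_zmod (nB j)
  -- each nA i divides the exponent of A
  have hnAexp : ∀ i, nA i ∣ Monoid.exponent A := by
    intro i
    have : nA i = orderOf (eA.symm <| Pi.mulSingle i <| Multiplicative.ofAdd 1) := by
      simpa only [MulEquiv.orderOf_eq, orderOf_piMulSingle, orderOf_ofAdd_eq_addOrderOf]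
        using (ZMod.addOrderOf_one (nA i)).symm
    exact this ▸ Monoid.order_dvd_exponent _
  -- p-power forms
  obtain ⟨KA, hKA⟩ := IsPGroup.iff_card.mp hpA
  obtain ⟨KB, hKB⟩ := IsPGroup.iff_card.mp hpB
  have hApow : ∀ i, ∃ e, nA i = p ^ e := fun i => by
    obtain ⟨e, -, he⟩ := (Nat.dvd_prime_pow hp).mp
      (hKA ▸ hcardA ▸ Finset.dvd_prod_of_mem nA (Finset.mem_univ i))
    exact ⟨e, he⟩
  have hBpow : ∀ j, ∃ e, nB j = p ^ e := fun j => by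
    obtain ⟨e, -, he⟩ := (Nat.dvd_prime_pow hp).mp
      (hKB ▸ hcardB ▸ Finset.dvd_prod_of_mem nB (Finset.mem_univ j))
    exact ⟨e, he⟩
  choose aA haA using hApow
  choose bB hbB using hBpow
  -- κ is not a subsingleton
  have hks : ¬ Subsingleton κ := by
    intro hs
    apply hBnc
    rcases isEmpty_or_nonempty κ with h | h
    · haveI : Subsingleton ((j : κ) → Multiplicative (ZMod (nB j))) := inferInstance
      haveI := eB.toEquiv.subsingleton
      exact isCyclic_of_subsingleton
    · obtain ⟨j⟩ := h
      haveI : Unique κ := ⟨⟨j⟩, fun k => Subsingleton.elim _ _⟩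
      haveI h1 : IsCyclic ((k : κ) → Multiplicative (ZMod (nB k))) :=
        isCyclic_of_surjective
          (MulEquiv.piUnique fun k => Multiplicative (ZMod (nB k))).symm.toMonoidHom
          (MulEquiv.piUnique fun k => Multiplicative (ZMod (nB k))).symm.surjective
      exact isCyclic_of_surjective eB.symm eB.symm.surjective
  haveI hκne : Nonempty κ := by
    by_contra h
    haveI := not_nonempty_iff.mp h
    exact hks inferInstance
  haveI hιne : Nonempty ι := by
    rcases isEmpty_or_nonempty ι with h | h
    · haveI := h
      haveI := eA.toEquiv.subsingleton
      exact absurd ‹Subsingleton A› (not_subsingleton A)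
    · exact h
  obtain ⟨j0, -, hj0⟩ := Finset.exists_mem_eq_sup Finset.univ Finset.univ_nonempty bB
  obtain ⟨j1, hj1⟩ : ∃ j1, j1 ≠ j0 := by
    by_contra h
    push_neg at h
    exact hks ⟨fun a b => (h a).trans (h b).symm⟩
  -- exponent of B divides p ^ (bB j0)
  have hexpB : Monoid.exponent B ∣ p ^ (bB j0) := by
    apply Monoid.exponent_dvd_of_forall_pow_eq_one
    intro x
    apply eB.injective
    rw [map_pow, map_one]
    funext j
    have h1 : (eB x j) ^ (nB j) = 1 := by
      have h2 := pow_card_eq_one' (x := eB x j)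
      rwa [card_mult_zmod] at h2
    obtain ⟨k, hk⟩ : nB j ∣ p ^ (bB j0) := by
      rw [hbB j, ← hj0]
      exact pow_dvd_pow p (Finset.le_sup (Finset.mem_univ j))
    rw [Pi.pow_apply, Pi.one_apply, hk, pow_mul, h1, one_pow]
  -- per-factor bound
  have hfac : ∀ i, nA i * p ≤ Nat.card (Multiplicative (ZMod (nA i)) →* B) := by
    intro i
    set m := nA i with hm
    set c : κ → ℕ := fun j => Nat.card {y : Multiplicative (ZMod (nB j)) // y ^ m = 1} with hc
    haveI : ∀ j, Nonempty {y : Multiplicative (ZMod (nB j)) // y ^ m = 1} :=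
      fun j => ⟨⟨1, one_pow m⟩⟩
    have hpos : ∀ j, 1 ≤ c j := fun j => Nat.card_pos
    have hcj0 : m ≤ c j0 := by
      apply dvd_le_sol
      · exact (hnAexp i).trans (hexp.trans hexpB) |>.trans (by rw [hbB j0])
      · exact dvd_rfl
    have hcj1 : p ≤ c j1 := by
      apply dvd_le_sol
      · rw [hbB j1]
        refine dvd_pow_self p fun h => ?_
        have := h1B j1; rw [hbB j1, h, pow_zero] at this; omega
      · rw [hm, haA i]
        refine dvd_pow_self p fun h => ?_
        have := h1A i; rw [haA i, h, pow_zero] at this; omega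
    have e1a : {b : B // b ^ m = 1} ≃
        {x : (∀ j, Multiplicative (ZMod (nB j))) // x ^ m = 1} :=
      Equiv.subtypeEquiv eB.toEquiv (fun b => by
        constructor
        · intro hb
          show (eB b) ^ m = 1
          rw [← map_pow, hb, map_one]
        · intro hb
          apply eB.injective
          rw [map_pow, map_one]; exact hb)
    have e1b : {x : (∀ j, Multiplicative (ZMod (nB j))) // x ^ m = 1} ≃
        {x : (∀ j, Multiplicative (ZMod (nB j))) // ∀ j, (x j) ^ m = 1} :=
      Equiv.subtypeEquivRight (fun x => by
        constructor
        · intro h j; rw [← Pi.pow_apply, h, Pi.one_apply]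
        · intro h; funext j; rw [Pi.pow_apply, h j, Pi.one_apply])
    have e1 : {b : B // b ^ m = 1} ≃ ∀ j, {y : Multiplicative (ZMod (nB j)) // y ^ m = 1} :=
      (e1a.trans e1b).trans (Equiv.subtypePiEquivPi (p := fun j (y : Multiplicative (ZMod (nB j))) => y ^ m = 1))
    have hsol : Nat.card {b : B // b ^ m = 1} = ∏ j, c j := by
      rw [Nat.card_congr e1, Nat.card_pi]
    calc m * p ≤ c j0 * c j1 := Nat.mul_le_mul hcj0 hcj1
      _ = ∏ j ∈ ({j0, j1} : Finset κ), c j := (Finset.prod_pair (Ne.symm hj1)).symm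
      _ ≤ ∏ j, c j := Finset.prod_le_prod_of_subset_of_one_le' (Finset.subset_univ _)
          (fun j _ _ => hpos j)
      _ = Nat.card {b : B // b ^ m = 1} := hsol.symm
      _ ≤ _ := sol_card_le_hom m
  -- assemble
  have ehom : (A →* B) ≃ ∀ i, (Multiplicative (ZMod (nA i)) →* B) :=
    ((MulEquiv.monoidHomCongrLeft eA).trans
      (Pi.monoidHomMulEquiv _ _)).toEquiv
  have hhom : Nat.card (A →* B) = ∏ i, Nat.card (Multiplicative (ZMod (nA i)) →* B) := by
    rw [Nat.card_congr ehom, Nat.card_pi]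
  have h2 : ∏ i, (nA i * p) ≤ Nat.card (A →* B) := by
    rw [hhom]
    exact Finset.prod_le_prod (fun i _ => Nat.zero_le _) (fun i _ => hfac i)
  have h3 : ∏ i, (nA i * p) = Nat.card A * p ^ Fintype.card ι := by
    rw [Finset.prod_mul_distrib, Finset.prod_const, hcardA, Finset.card_univ]
  have h4 : Nat.card A * p ≤ Nat.card A * p ^ Fintype.card ι := by
    refine Nat.mul_le_mul_left _ ?_
    calc p = p ^ 1 := (pow_one p).symm
      _ ≤ p ^ Fintype.card ι := Nat.pow_le_pow_right hp.pos Fintype.card_pos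
  have h5 : Nat.card A < Nat.card A * p := by
    have h0 := Nat.card_pos (α := A)
    exact lt_mul_of_one_lt_right h0 hp.one_lt
  omega


/-- Let `G` be a finite non-abelian `p`-group.  If the group `C*` of central automorphisms
fixing `Z(G)` elementwise equals `Inn(G)`, then `G` is nilpotent of class 2 and `Z(G)` is
cyclic. -/
theorem stmt_16 (p : ℕ) [Fact p.Prime] (G : Type*) [Group G] [Finite G]
    (hp : IsPGroup p G) (hnab : ∃ a b : G, a * b ≠ b * a)
    (Cstar : Subgroup (MulAut G))
    (hC : ∀ α : MulAut G, α ∈ Cstar ↔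
      (∀ g : G, g⁻¹ * α g ∈ Subgroup.center G) ∧ ∀ z ∈ Subgroup.center G, α z = z)
    (heq : Cstar = (MulAut.conj : G →* MulAut G).range) :
    commutator G ≤ Subgroup.center G ∧ IsCyclic (Subgroup.center G) := by
  classical
  have hconjmem : ∀ g : G, MulAut.conj g ∈ Cstar := fun g => heq ▸ ⟨g, rfl⟩
  have hcomm : commutator G ≤ Subgroup.center G := by
    rw [commutator_def, Subgroup.commutator_le]
    intro g _ h _
    have h1 := ((hC (MulAut.conj h)).mp (hconjmem h)).1 g⁻¹
    have e : ⁅g, h⁆ = (g⁻¹)⁻¹ * (MulAut.conj h) g⁻¹ := by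
      simp only [MulAut.conj_apply, commutatorElement_def, inv_inv]
      group
    exact e ▸ h1
  refine ⟨hcomm, ?_⟩
  by_contra hcyc
  set Z := Subgroup.center G with hZ
  letI : CommGroup (G ⧸ Z) :=
    { (inferInstance : Group (G ⧸ Z)) with
      mul_comm := by
        intro a b
        induction a using QuotientGroup.induction_on with | _ x => ?_
        induction b using QuotientGroup.induction_on with | _ y => ?_
        rw [← QuotientGroup.mk_mul, ← QuotientGroup.mk_mul, QuotientGroup.eq]
        have hxy : (x * y)⁻¹ * (y * x) = ⁅y⁻¹, x⁻¹⁆ := by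
          rw [commutatorElement_def]; group
        rw [hxy]
        refine hcomm ?_
        rw [_root_.commutator_def]
        exact Subgroup.commutator_mem_commutator (Subgroup.mem_top _) (Subgroup.mem_top _) }
  -- exponent of G/Z divides exponent of Z
  have hexp : Monoid.exponent (G ⧸ Z) ∣ Monoid.exponent ↥Z := by
    apply Monoid.exponent_dvd_of_forall_pow_eq_one
    intro a
    induction a using QuotientGroup.induction_on with | _ g => ?_
    set n := Monoid.exponent ↥Z with hn
    have : ((g : G ⧸ Z)) ^ n = ((g ^ n : G) : G ⧸ Z) := by
      rw [QuotientGroup.mk_pow]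
    rw [this, QuotientGroup.eq_one_iff]
    rw [hZ, Subgroup.mem_center_iff]
    intro x
    set c : G := g * x * g⁻¹ * x⁻¹ with hcdef
    have hc : c ∈ Z := by
      refine hcomm ?_
      rw [_root_.commutator_def]
      have : c = ⁅g, x⁆ := by rw [commutatorElement_def]
      rw [this]
      exact Subgroup.commutator_mem_commutator (Subgroup.mem_top _) (Subgroup.mem_top _)
    have hcc : ∀ y : G, y * c = c * y := Subgroup.mem_center_iff.mp hc
    have hcn : c ^ n = 1 := by
      have h1 : (⟨c, hc⟩ : ↥Z) ^ n = 1 := Monoid.pow_exponent_eq_one _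
      have h2 := congrArg (Subtype.val) h1
      simpa using h2
    have hstep : g * x = c * (x * g) := by rw [hcdef]; group
    have hkey : ∀ k, g ^ k * x = c ^ k * (x * g ^ k) := by
      intro k
      induction k with
      | zero => simp
      | succ k ih =>
        have hck : ∀ y : G, y * c ^ k = c ^ k * y :=
          Subgroup.mem_center_iff.mp (pow_mem hc k)
        calc g ^ (k + 1) * x = g * (g ^ k * x) := by rw [pow_succ']; rw [mul_assoc]
          _ = g * (c ^ k * (x * g ^ k)) := by rw [ih]
          _ = (g * c ^ k) * (x * g ^ k) := by rw [mul_assoc]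
          _ = (c ^ k * g) * (x * g ^ k) := by rw [← hck g]
          _ = c ^ k * ((g * x) * g ^ k) := by rw [mul_assoc, ← mul_assoc g x]
          _ = c ^ k * ((c * (x * g)) * g ^ k) := by rw [hstep]
          _ = c ^ (k + 1) * (x * g ^ (k + 1)) := by
              rw [pow_succ]
              group
    have := hkey n
    rw [hcn, one_mul] at this
    exact this.symm
  haveI : Nontrivial (G ⧸ Z) := by
    obtain ⟨a, b, hab⟩ := hnab
    by_contra h
    rw [not_nontrivial_iff_subsingleton] at h
    apply hab
    have ha : a ∈ Z := by
      have h1 : (a : G ⧸ Z) = 1 := Subsingleton.elim _ _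
      exact (QuotientGroup.eq_one_iff a).mp h1
    exact (Subgroup.mem_center_iff.mp ha b).symm
  -- the injection from homs into Cstar
  haveI : Finite (MulAut G) :=
    Finite.of_injective (fun α : MulAut G => (α : G → G))
      (fun α β h => by ext x; exact congrFun h x)
  have hcard1 : Nat.card ((G ⧸ Z) →* ↥Z) ≤ Nat.card ↥Cstar := by
    have hex : ∀ f : (G ⧸ Z) →* ↥Z, ∃ α : MulAut G,
        α ∈ Cstar ∧ ∀ g : G, α g = g * ↑(f ↑g) := by
      intro f
      have hmm : ∀ x y : G, (x * y) * ↑(f ↑(x * y)) = (x * ↑(f ↑x)) * (y * ↑(f ↑y)) := by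
        intro x y
        have hfm : (↑(f ↑(x * y)) : G) = ↑(f ↑x) * ↑(f ↑y) := by
          rw [QuotientGroup.mk_mul, map_mul]; rfl
        have ha : ∀ w : G, w * (↑(f ↑x) : G) = ↑(f ↑x) * w :=
          Subgroup.mem_center_iff.mp (f ↑x).2
        rw [hfm]
        calc x * y * ((↑(f ↑x) : G) * ↑(f ↑y))
            = x * ((y * ↑(f ↑x)) * ↑(f ↑y)) := by simp only [mul_assoc]
          _ = x * ((↑(f ↑x) * y) * ↑(f ↑y)) := by rw [ha y]
          _ = x * ↑(f ↑x) * (y * ↑(f ↑y)) := by simp only [mul_assoc]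
      let ψ : G →* G :=
        { toFun := fun g => g * ↑(f ↑g)
          map_one' := by simp
          map_mul' := fun x y => hmm x y }
      have hinj : Function.Injective ψ := by
        intro x y hxy
        have hq : (x : G ⧸ Z) = (y : G ⧸ Z) := by
          have h1 : ((x * ↑(f ↑x) : G) : G ⧸ Z) = ((y * ↑(f ↑y) : G) : G ⧸ Z) :=
            congrArg _ hxy
          rwa [QuotientGroup.mk_mul, QuotientGroup.mk_mul,
            (QuotientGroup.eq_one_iff _).mpr (f ↑x).2,
            (QuotientGroup.eq_one_iff _).mpr (f ↑y).2, mul_one, mul_one] at h1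
        have : x * ↑(f ↑x) = y * ↑(f ↑x) := by
          have := hxy
          show x * ↑(f ↑x) = y * ↑(f ↑x)
          calc x * ↑(f ↑x) = ψ x := rfl
            _ = ψ y := hxy
            _ = y * ↑(f ↑y) := rfl
            _ = y * ↑(f ↑x) := by rw [hq]
        exact mul_right_cancel this
      have hbij := Finite.injective_iff_bijective.mp hinj
      refine ⟨MulEquiv.ofBijective ψ hbij, ?_, fun g => rfl⟩
      rw [hC]
      constructor
      · intro g
        show g⁻¹ * (g * ↑(f ↑g)) ∈ Subgroup.center G
        rw [← mul_assoc, inv_mul_cancel, one_mul]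
        exact (f ↑g).2
      · intro z hz
        show z * ↑(f ↑z) = z
        have h1 : ((z : G) : G ⧸ Z) = 1 := (QuotientGroup.eq_one_iff z).mpr hz
        rw [h1, map_one]
        simp
    choose Φ hΦ1 hΦ2 using hex
    refine Nat.card_le_card_of_injective (fun f => (⟨Φ f, hΦ1 f⟩ : ↥Cstar)) ?_
    intro f f' hff
    have hαα : Φ f = Φ f' := congrArg Subtype.val hff
    refine MonoidHom.ext fun a => ?_
    induction a using QuotientGroup.induction_on with | _ g => ?_
    have h1 : (g : G) * ↑(f ↑g) = g * ↑(f' ↑g) := by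
      rw [← hΦ2 f g, ← hΦ2 f' g, hαα]
    have h2 : (↑(f ↑g) : G) = ↑(f' ↑g) := mul_left_cancel h1
    exact Subtype.ext h2
  have hker : (MulAut.conj : G →* MulAut G).ker = Z := by
    ext g
    rw [MonoidHom.mem_ker]
    constructor
    · intro h
      rw [hZ, Subgroup.mem_center_iff]
      intro y
      have h1 := congrArg (fun α : MulAut G => α y) h
      simp only [MulAut.conj_apply, MulAut.one_apply] at h1
      calc y * g = (g * y * g⁻¹) * g := by rw [h1]
        _ = g * y := by group
    · intro h
      have hcc := Subgroup.mem_center_iff.mp h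
      refine MulEquiv.ext fun y => ?_
      show g * y * g⁻¹ = y
      rw [← hcc y]
      group
  have hcard2 : Nat.card ↥Cstar = Nat.card (G ⧸ Z) := by
    rw [heq]
    have e := QuotientGroup.quotientKerEquivRange (MulAut.conj : G →* MulAut G)
    rw [← Nat.card_congr e.toEquiv, hker]
  have hlt : Nat.card (G ⧸ Z) < Nat.card ((G ⧸ Z) →* ↥Z) := by
    letI : CommGroup ↥Z := { (inferInstance : Group ↥Z) with
      mul_comm := fun a b => Subtype.ext (Subgroup.mem_center_iff.mp b.2 a.1) }
    refine card_lt_card_hom (Fact.out : p.Prime) (G ⧸ Z) ↥Z ?_ ?_ hcyc hexp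
    · exact hp.to_quotient Z
    · exact hp.to_subgroup Z
  omega
end

section
/- Let G be a finite p-group, nilpotent of class 2, with Z(G) cyclic. Then C*, the group of central automorphisms fixing the center elementwise, equals Inn(G). -/
/-- An injective homomorphism from a finite cyclic group into `ℂˣ`. -/
private lemma exists_inj_hom_units (C : Type*) [CommGroup C] [Finite C] [IsCyclic C] :
    ∃ ι : C →* ℂˣ, Function.Injective ι := by
  set n := Nat.card C with hn
  have hn0 : n ≠ 0 := Nat.card_pos.ne'
  haveI : NeZero ((n : ℂ)) := ⟨Nat.cast_ne_zero.mpr hn0⟩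
  obtain ⟨ζ0, hζ0⟩ := HasEnoughRootsOfUnity.exists_primitiveRoot ℂ n
  have hζ : IsPrimitiveRoot ((hζ0.isUnit hn0).unit) n :=
    hζ0.isUnit_unit hn0
  set ζ := (hζ0.isUnit hn0).unit with hζdef
  let e1 : ZMod n ≃+ Additive (Subgroup.zpowers ζ) := hζ.zmodEquivZPowers
  let e2 : Multiplicative (ZMod n) ≃* Subgroup.zpowers ζ := AddEquiv.toMultiplicativeLeft e1
  let e3 : Multiplicative (ZMod n) ≃* C := zmodCyclicMulEquiv inferInstance
  refine ⟨((Subgroup.zpowers ζ).subtype.comp e2.toMonoidHom).comp e3.symm.toMonoidHom, ?_⟩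
  intro a b hab
  simp only [MonoidHom.comp_apply, Subgroup.coe_subtype, MulEquiv.coe_toMonoidHom] at hab
  have := e2.injective (Subtype.ext hab)
  exact e3.symm.injective this

/-- If `C` is a finite cyclic group and `A` a finite commutative group, then
`|Hom(A, C)| ≤ |A|`. -/
private lemma card_monoidHom_le (A C : Type*) [CommGroup A] [Finite A] [CommGroup C]
    [Finite C] [IsCyclic C] : Nat.card (A →* C) ≤ Nat.card A := by
  obtain ⟨ι, hι⟩ := exists_inj_hom_units C
  haveI : NeZero ((Monoid.exponent A : ℂ)) :=
    ⟨Nat.cast_ne_zero.mpr Monoid.exponent_ne_zero_of_finite⟩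
  obtain ⟨E⟩ := CommGroup.monoidHom_mulEquiv_of_hasEnoughRootsOfUnity A ℂ
  haveI : Finite (A →* ℂˣ) := Finite.of_equiv A E.symm.toEquiv
  have h1 : Nat.card (A →* ℂˣ) = Nat.card A := Nat.card_congr E.toEquiv
  have h2 : Function.Injective (fun f : A →* C => ι.comp f) := by
    intro f g h
    ext a
    exact hι (congrArg (fun φ => φ a) h)
  calc Nat.card (A →* C) ≤ Nat.card (A →* ℂˣ) := Nat.card_le_card_of_injective _ h2
    _ = Nat.card A := h1

/-- Let `G` be a finite `p`-group, nilpotent of class 2 (`1 ≠ G' ≤ Z(G)`), with `Z(G)`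
cyclic.  Then `C*`, the group of central automorphisms fixing the center elementwise,
equals `Inn(G)`. -/
theorem stmt_17 (p : ℕ) [Fact p.Prime] (G : Type*) [Group G] [Finite G]
    (hp : IsPGroup p G) (hne : commutator G ≠ ⊥)
    (hc2 : commutator G ≤ Subgroup.center G) (hcyc : IsCyclic (Subgroup.center G))
    (Cstar : Subgroup (MulAut G))
    (hC : ∀ α : MulAut G, α ∈ Cstar ↔
      (∀ g : G, g⁻¹ * α g ∈ Subgroup.center G) ∧ ∀ z ∈ Subgroup.center G, α z = z) :
    Cstar = (MulAut.conj : G →* MulAut G).range := by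
  classical
  haveI := hcyc
  set Z := Subgroup.center G with hZ
  -- the quotient by the center is commutative since `G` has class 2
  letI : CommGroup (G ⧸ Z) :=
    { (inferInstance : Group (G ⧸ Z)) with
      mul_comm := by
        intro a b
        induction a using QuotientGroup.induction_on with | H a =>
        induction b using QuotientGroup.induction_on with | H b =>
        rw [← QuotientGroup.mk_mul, ← QuotientGroup.mk_mul, QuotientGroup.eq]
        open scoped commutatorElement in have h1 : (a * b)⁻¹ * (b * a) = ⁅b⁻¹, a⁻¹⁆ := by group
        rw [h1]
        exact hc2 (Subgroup.commutator_mem_commutator (Subgroup.mem_top _)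
          (Subgroup.mem_top _)) }
  -- inner automorphisms lie in `Cstar`
  have hInn : (MulAut.conj : G →* MulAut G).range ≤ Cstar := by
    rintro α ⟨g, rfl⟩
    rw [hC]
    refine ⟨fun x => ?_, fun z hz => ?_⟩
    · open scoped commutatorElement in
      have h1 : x⁻¹ * MulAut.conj g x = ⁅x⁻¹, g⁆ := by
        simp only [MulAut.conj_apply]; group
      rw [h1]
      exact hc2 (Subgroup.commutator_mem_commutator (Subgroup.mem_top _) (Subgroup.mem_top _))
    · have := Subgroup.mem_center_iff.mp hz g
      simp only [MulAut.conj_apply]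
      rw [this, mul_inv_cancel_right]
  -- kernel of `conj` is the center
  have hker : (MulAut.conj : G →* MulAut G).ker = Z := by
    ext g
    simp only [MonoidHom.mem_ker]
    constructor
    · intro h
      rw [Subgroup.mem_center_iff]
      intro a
      have := congrArg (fun φ : MulAut G => φ a) h
      simp only [MulAut.conj_apply, MulAut.one_apply] at this
      calc a * g = g * a * g⁻¹ * g := by rw [this]
        _ = g * a := by group
    · intro h
      ext x
      have := Subgroup.mem_center_iff.mp h x
      simp only [MulAut.conj_apply, MulAut.one_apply]
      rw [← this, mul_inv_cancel_right]
  haveI : Finite (MulAut G) :=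
    Finite.of_injective (fun α : MulAut G => (α : G → G)) DFunLike.coe_injective
  -- cardinality of the inner automorphism group
  have e1 : Nat.card ((MulAut.conj : G →* MulAut G).range) = Nat.card (G ⧸ Z) := by
    rw [← hker]
    exact (Nat.card_congr (QuotientGroup.quotientKerEquivRange
      (MulAut.conj : G →* MulAut G)).toEquiv).symm
  -- embed `Cstar` into `Hom(G⧸Z, Z)`
  have hstep : Nat.card Cstar ≤ Nat.card ((G ⧸ Z) →* Z) := by
    -- for each `α ∈ Cstar`, the map `g ↦ g⁻¹ * α g` is a hom `G →* Z`
    let f : ∀ α : Cstar, G →* Z := fun α =>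
      { toFun := fun g => ⟨g⁻¹ * α.1 g, ((hC α.1).mp α.2).1 g⟩
        map_one' := by ext; simp
        map_mul' := by
          intro g h
          ext
          have hcen : ∀ a : G, a * (g⁻¹ * α.1 g) = (g⁻¹ * α.1 g) * a := fun a =>
            Subgroup.mem_center_iff.mp (((hC α.1).mp α.2).1 g) a
          show (g * h)⁻¹ * α.1 (g * h) = (g⁻¹ * α.1 g) * (h⁻¹ * α.1 h)
          rw [map_mul, mul_inv_rev]
          calc h⁻¹ * g⁻¹ * (α.1 g * α.1 h) = h⁻¹ * (g⁻¹ * α.1 g) * α.1 h := by group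
            _ = (g⁻¹ * α.1 g) * h⁻¹ * α.1 h := by rw [hcen h⁻¹]
            _ = (g⁻¹ * α.1 g) * (h⁻¹ * α.1 h) := by group }
    have hf1 : ∀ α : Cstar, ∀ z ∈ Z, f α z = 1 := by
      intro α z hz
      ext
      show z⁻¹ * α.1 z = 1
      rw [((hC α.1).mp α.2).2 z hz, inv_mul_cancel]
    let Ψ : Cstar → ((G ⧸ Z) →* Z) := fun α => QuotientGroup.lift Z (f α) (hf1 α)
    have hΨ : Function.Injective Ψ := by
      intro α β h
      have hpt : ∀ g : G, (α.1 : MulAut G) g = β.1 g := by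
        intro g
        have h1 : Ψ α ((g : G ⧸ Z)) = Ψ β ((g : G ⧸ Z)) := by rw [h]
        have h2 : (f α g : G) = f β g := congrArg Subtype.val h1
        have h3 : g⁻¹ * α.1 g = g⁻¹ * β.1 g := h2
        exact mul_left_cancel h3
      exact Subtype.ext (by ext g; exact hpt g)
    haveI : Finite ((G ⧸ Z) →* Z) :=
      Finite.of_injective (fun φ : (G ⧸ Z) →* Z => (φ : G ⧸ Z → Z)) DFunLike.coe_injective
    exact Nat.card_le_card_of_injective Ψ hΨ
  have hcard : Nat.card Cstar ≤ Nat.card ((MulAut.conj : G →* MulAut G).range) := by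
    rw [e1]
    open scoped IsMulCommutative in exact hstep.trans (card_monoidHom_le (G ⧸ Z) Z)
  exact (Subgroup.eq_of_le_of_card_ge hInn hcard).symm
end
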